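/- arXiv:1702.04200 — 6 statements merged into one kernel-verified Lean document; each statement's English description precedes it below -/
import Mathlib

section
/- Let LΓ_p(x) := ∫_{Z_p} φ_p(x+t) dt where φ_p(y) = y(log_p(y)-1)·χ(y) and χ is the characteristic function of {y ∈ C_p : |y|_p ≥ 1}. Then for all x ∈ C_p, LΓ_p(x+1) - LΓ_p(x) = χ(x)·log_p(x); that is, the difference equals log_p(x) when |x|_p ≥ 1 and equals 0 when |x|_p < 1. -/
open Filter

private lemma nat_inv_norm_le (p : ℕ) [Fact p.Prime] (K : Type*) [NontriviallyNormedField K]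
    [Algebra ℚ_[p] K] (hiso : ∀ q : ℚ_[p], ‖algebraMap ℚ_[p] K q‖ = ‖q‖)
    (m : ℕ) (hm : 0 < m) : ‖((m : K))⁻¹‖ ≤ m := by
  have hm0 : ((m : ℚ_[p])) ≠ 0 := Nat.cast_ne_zero.mpr hm.ne'
  have hK : ‖(m : K)‖ = ‖(m : ℚ_[p])‖ := by
    rw [← map_natCast (algebraMap ℚ_[p] K), hiso]
  rw [norm_inv, hK, Padic.norm_eq_zpow_neg_valuation hm0, Padic.valuation_natCast, ← zpow_neg, neg_neg,
    zpow_natCast, ← Nat.cast_pow]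
  exact_mod_cast Nat.le_of_dvd hm (pow_padicValNat_dvd)

private lemma two_add_le (k : ℕ) : ((k : ℝ) + 2) ≤ 2 * 2 ^ k := by
  induction k with
  | zero => norm_num
  | succ n ih =>
    have h : (0:ℝ) < 2 ^ n := by positivity
    push_cast
    rw [pow_succ]
    push_cast at ih
    nlinarith

/-- Difference equation for Kashio's `p`-adic log-gamma function
`LΓ_p(x) = ∫_{ℤ_p} φ_p(x+t) dt`: for all `x ∈ ℂ_p`,
`LΓ_p(x+1) - LΓ_p(x) = χ(x) log_p(x)`. -/
theorem kashio_log_gamma_difference (p : ℕ) [Fact p.Prime] (K : Type*)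
    [NontriviallyNormedField K] [CompleteSpace K] [IsAlgClosed K] [IsUltrametricDist K]
    [Algebra ℚ_[p] K] (hiso : ∀ q : ℚ_[p], ‖algebraMap ℚ_[p] K q‖ = ‖q‖)
    (logp : K → K)
    (hlog_an : ∀ x : K, x ≠ 0 → AnalyticAt K logp x)
    (hlog_mul : ∀ x y : K, x ≠ 0 → y ≠ 0 → logp (x * y) = logp x + logp y)
    (hlog_p : logp (p : K) = 0)
    (hlog_series : ∀ x : K, ‖x - 1‖ < 1 →
      HasSum (fun n : ℕ => (-1) ^ n * (x - 1) ^ (n + 1) / (n + 1 : K)) (logp x))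
    (LG : K → K)
    (hLG : ∀ x : K,
      Tendsto (fun n : ℕ => ((p : K) ^ n)⁻¹ * ∑ j ∈ Finset.range (p ^ n),
          (if 1 ≤ ‖x + (j : K)‖ then (x + (j : K)) * (logp (x + (j : K)) - 1) else 0))
        atTop (nhds (LG x)))
    (x : K) :
    LG (x + 1) - LG x = if 1 ≤ ‖x‖ then logp x else 0 := by
  classical
  set φ : K → K := fun y => if 1 ≤ ‖y‖ then y * (logp y - 1) else 0 with hφ
  have hLG' : ∀ y : K, Tendsto (fun n : ℕ => ((p : K) ^ n)⁻¹ *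
      ∑ j ∈ Finset.range (p ^ n), φ (y + (j : K))) atTop (nhds (LG y)) := by
    intro y; simpa only [hφ] using hLG y
  have hp1 : (1 : ℝ) < p := by exact_mod_cast (Fact.out : p.Prime).one_lt
  have hpK : ‖(p : K)‖ = (p : ℝ)⁻¹ := by
    rw [← map_natCast (algebraMap ℚ_[p] K), hiso, Padic.norm_p]
  have hpK1 : ‖(p : K)‖ < 1 := by
    rw [hpK]; exact inv_lt_one_of_one_lt₀ hp1
  have hpK0 : (p : K) ≠ 0 := by
    intro h
    rw [h, norm_zero] at hpK
    exact absurd hpK.symm (by positivity)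
  -- telescoping identity
  have key : ∀ n : ℕ,
      (((p : K) ^ n)⁻¹ * ∑ j ∈ Finset.range (p ^ n), φ (x + 1 + (j : K)))
      - ((p : K) ^ n)⁻¹ * ∑ j ∈ Finset.range (p ^ n), φ (x + (j : K))
      = ((p : K) ^ n)⁻¹ * (φ (x + (p : K) ^ n) - φ x) := by
    intro n
    rw [← mul_sub]
    congr 1
    have h1 : ∀ j : ℕ, x + 1 + (j : K) = x + ((j + 1 : ℕ) : K) := by
      intro j; push_cast; ring
    have hsum : ∑ j ∈ Finset.range (p ^ n), φ (x + 1 + (j : K))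
        = (∑ j ∈ Finset.range (p ^ n), φ (x + (j : K))) + (φ (x + (p : K) ^ n) - φ x) := by
      calc ∑ j ∈ Finset.range (p ^ n), φ (x + 1 + (j : K))
          = ∑ j ∈ Finset.range (p ^ n), φ (x + ((j + 1 : ℕ) : K)) :=
            Finset.sum_congr rfl fun j _ => by rw [h1]
        _ = (∑ j ∈ Finset.range (p ^ n + 1), φ (x + (j : K))) - φ (x + ((0 : ℕ) : K)) := by
            rw [Finset.sum_range_succ']; ring
        _ = (∑ j ∈ Finset.range (p ^ n), φ (x + (j : K))) + φ (x + ((p ^ n : ℕ) : K))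
              - φ (x + ((0 : ℕ) : K)) := by rw [Finset.sum_range_succ]
        _ = (∑ j ∈ Finset.range (p ^ n), φ (x + (j : K))) + (φ (x + (p : K) ^ n) - φ x) := by
            rw [Nat.cast_pow, Nat.cast_zero, add_zero]; ring
    rw [hsum]; ring
  have hdiff : Tendsto (fun n : ℕ => ((p : K) ^ n)⁻¹ * (φ (x + (p : K) ^ n) - φ x))
      atTop (nhds (LG (x + 1) - LG x)) := by
    refine ((hLG' (x + 1)).sub (hLG' x)).congr fun n => ?_
    exact key n
  -- now compute the limit
  have hmain : Tendsto (fun n : ℕ => ((p : K) ^ n)⁻¹ * (φ (x + (p : K) ^ n) - φ x))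
      atTop (nhds (if 1 ≤ ‖x‖ then logp x else 0)) := by
    by_cases hx : 1 ≤ ‖x‖
    · rw [if_pos hx]
      have hx0 : x ≠ 0 := by
        rintro rfl; rw [norm_zero] at hx; linarith
      set u : ℕ → K := fun n => (p : K) ^ n / x with hu
      have hu0 : ∀ n, u n ≠ 0 := fun n => div_ne_zero (pow_ne_zero _ hpK0) hx0
      have hun : ∀ n, ‖u n‖ ≤ ‖(p : K)‖ ^ n := by
        intro n
        rw [hu]
        simp only [norm_div, norm_pow]
        exact div_le_self (by positivity) hx
      have hpow0 : Tendsto (fun n : ℕ => ‖(p : K)‖ ^ n) atTop (nhds 0) :=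
        tendsto_pow_atTop_nhds_zero_of_lt_one (norm_nonneg _) hpK1
      have hu_to : Tendsto u atTop (nhds 0) := squeeze_zero_norm hun hpow0
      set s : ℕ → K := fun n => (u n)⁻¹ * logp (1 + u n) with hs
      have hlogu : ∀ n, logp (1 + u n) = u n * s n := by
        intro n
        rw [hs, ← mul_assoc, mul_inv_cancel₀ (hu0 n), one_mul]
      have heq : ∀ (v : K), v ≠ 0 → ∀ k : ℕ,
          v⁻¹ * ((-1) ^ k * v ^ (k + 1) / ((k : K) + 1))
          = (-1) ^ k * v ^ k / ((k : K) + 1) := by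
        intro v hv k
        have h2 : (-1:K) ^ k * v ^ (k+1) / ((k : K) + 1)
            = v * ((-1) ^ k * v ^ k / ((k : K) + 1)) := by
          rw [pow_succ]; ring
        rw [h2, ← mul_assoc, inv_mul_cancel₀ hv, one_mul]
      have hs_sum : ∀ n, ‖u n‖ < 1 →
          HasSum (fun k : ℕ => (-1) ^ k * (u n) ^ k / ((k : K) + 1)) (s n) := by
        intro n hn
        have h0 := (hlog_series (1 + u n) (by simpa using hn)).mul_left (u n)⁻¹
        simp only [add_sub_cancel_left, heq (u n) (hu0 n)] at h0
        exact h0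
      -- norm estimate for s n - 1
      have hs_est : ∀ n, ‖u n‖ < 1 → ‖u n‖ ≤ 2⁻¹ → ‖s n - 1‖ ≤ 2 * ‖u n‖ := by
        intro n hn1 hn2
        have h0 := hs_sum n hn1
        have h1 : HasSum (fun k : ℕ => (-1) ^ (k + 1) * (u n) ^ (k + 1) / (((k + 1 : ℕ) : K) + 1))
            (s n - 1) := by
          have := (hasSum_nat_add_iff'
            (f := fun k : ℕ => (-1) ^ k * (u n) ^ k / ((k : K) + 1)) 1).mpr h0
          simpa using this
        rw [← h1.tsum_eq]
        refine IsUltrametricDist.norm_tsum_le_of_forall_le_of_nonneg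
          (by positivity) fun k => ?_
        have hk : ‖(-1 : K) ^ (k + 1) * (u n) ^ (k + 1) / (((k + 1 : ℕ) : K) + 1)‖
            = ‖u n‖ ^ (k + 1) * ‖((((k + 2 : ℕ)) : K))⁻¹‖ := by
          rw [div_eq_mul_inv, norm_mul, norm_mul, norm_pow, norm_neg, norm_one, one_pow, one_mul,
            norm_pow]
          congr 3
          push_cast; ring
        rw [hk]
        have hb : ‖((((k + 2 : ℕ)) : K))⁻¹‖ ≤ (k + 2 : ℝ) := by
          have := nat_inv_norm_le p K hiso (k + 2) (by omega)
          exact_mod_cast this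
        calc ‖u n‖ ^ (k + 1) * ‖((((k + 2 : ℕ)) : K))⁻¹‖
            ≤ ‖u n‖ ^ (k + 1) * (k + 2 : ℝ) :=
              mul_le_mul_of_nonneg_left hb (by positivity)
          _ = ‖u n‖ * (‖u n‖ ^ k * ((k : ℝ) + 2)) := by ring
          _ ≤ ‖u n‖ * 2 := by
              refine mul_le_mul_of_nonneg_left ?_ (norm_nonneg _)
              calc ‖u n‖ ^ k * ((k : ℝ) + 2) ≤ (2⁻¹ : ℝ) ^ k * ((k : ℝ) + 2) :=
                    mul_le_mul_of_nonneg_right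
                      (pow_le_pow_left₀ (norm_nonneg _) hn2 k) (by positivity)
                _ ≤ 2 := by
                    rw [inv_pow, inv_mul_le_iff₀ (by positivity)]
                    calc ((k : ℝ) + 2) ≤ 2 * 2 ^ k := two_add_le k
                      _ = 2 ^ k * 2 := by ring
          _ = 2 * ‖u n‖ := by ring
      -- s n → 1
      have hs_to : Tendsto s atTop (nhds 1) := by
        have hev : ∀ᶠ n in atTop, ‖s n - 1‖ ≤ 2 * ‖(p : K)‖ ^ n := by
          filter_upwards [hpow0.eventually_lt_const (show (0:ℝ) < 2⁻¹ by norm_num)] with n hn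
          have h1 : ‖u n‖ < 1 := lt_of_le_of_lt (hun n) (lt_trans hn (by norm_num))
          have h2 : ‖u n‖ ≤ 2⁻¹ := le_trans (hun n) hn.le
          refine le_trans (hs_est n h1 h2) ?_
          have := hun n
          linarith
        have h2 : Tendsto (fun n : ℕ => 2 * ‖(p : K)‖ ^ n) atTop (nhds 0) := by
          simpa using hpow0.const_mul 2
        have h3 := squeeze_zero_norm' hev h2
        have h4 : Tendsto (fun n => (s n - 1) + 1) atTop (nhds (0 + 1)) :=
          h3.add tendsto_const_nhds
        simpa using h4
      -- eventual formula
      have hev : ∀ᶠ n in atTop, ((p : K) ^ n)⁻¹ * (φ (x + (p : K) ^ n) - φ x)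
          = (logp x - 1) + (1 + u n) * s n := by
        filter_upwards [eventually_ge_atTop 1] with n hn
        have hnorm : ‖(p : K) ^ n‖ < 1 := by
          rw [norm_pow]
          exact pow_lt_one₀ (norm_nonneg _) hpK1 (by omega)
        have hne : ‖(p : K) ^ n‖ ≠ ‖x‖ := ne_of_lt (lt_of_lt_of_le hnorm hx)
        have hxh : ‖x + (p : K) ^ n‖ = ‖x‖ := by
          rw [IsUltrametricDist.norm_add_eq_max_of_norm_ne_norm hne.symm]
          exact max_eq_left (le_trans hnorm.le hx)
        have hpn1 : ‖(p : K)‖ ^ n < 1 := by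
          calc ‖(p : K)‖ ^ n ≤ ‖(p : K)‖ ^ 1 :=
                pow_le_pow_of_le_one (norm_nonneg _) hpK1.le hn
            _ = ‖(p : K)‖ := pow_one _
            _ < 1 := hpK1
        have hun1 : ‖u n‖ < 1 := lt_of_le_of_lt (hun n) hpn1
        have h1u : (1 : K) + u n ≠ 0 := by
          intro h
          have hu1 : u n = -1 := by linear_combination h
          rw [hu1, norm_neg, norm_one] at hun1
          exact lt_irrefl _ hun1
        have hxu : x * (1 + u n) = x + (p : K) ^ n := by
          rw [hu]; field_simp
        have hlx : logp (x + (p : K) ^ n) = logp x + u n * s n := by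
          rw [← hxu, hlog_mul x (1 + u n) hx0 h1u, hlogu n]
        rw [hφ]
        simp only [if_pos (hxh ▸ hx), if_pos hx, hlx]
        have hxueq : (p : K) ^ n = x * u n := by rw [hu]; field_simp
        rw [hxueq]
        have hxu0 : x * u n ≠ 0 := mul_ne_zero hx0 (hu0 n)
        have hun0 := hu0 n
        field_simp
        ring
      have hlim : Tendsto (fun n : ℕ => (logp x - 1) + (1 + u n) * s n) atTop
          (nhds ((logp x - 1) + (1 + 0) * 1)) :=
        tendsto_const_nhds.add ((tendsto_const_nhds.add hu_to).mul hs_to)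
      have hlim' : Tendsto (fun n : ℕ => (logp x - 1) + (1 + u n) * s n) atTop
          (nhds (logp x)) := by
        simpa using hlim
      exact Tendsto.congr' (hev.mono fun n h => h.symm) hlim'
    · rw [if_neg hx]
      have hev : ∀ᶠ n in atTop, ((p : K) ^ n)⁻¹ * (φ (x + (p : K) ^ n) - φ x) = 0 := by
        filter_upwards [eventually_ge_atTop 1] with n hn
        have hnorm : ‖(p : K) ^ n‖ < 1 := by
          rw [norm_pow]
          exact pow_lt_one₀ (norm_nonneg _) hpK1 (by omega)
        have h1 : ‖x + (p : K) ^ n‖ < 1 :=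
          lt_of_le_of_lt (IsUltrametricDist.norm_add_le_max x _)
            (max_lt (lt_of_not_ge hx) hnorm)
        rw [hφ]
        simp only [if_neg (not_le.mpr h1), if_neg hx, sub_zero, sub_self, mul_zero]
      exact Tendsto.congr' (hev.mono fun n h => h.symm) tendsto_const_nhds
  exact tendsto_nhds_unique hdiff hmain
end

section
/- With LΓ_p defined as the Volkenborn integral of φ_p(x+t) (φ_p(y) = y(log_p(y)-1) for |y|_p ≥ 1, φ_p(y) = 0 otherwise), one has the reflection formula LΓ_p(1-x) + LΓ_p(x) = 0 for all x ∈ C_p. -/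
open Filter

private lemma aux_sum_range_mul {M : Type*} [AddCommMonoid M] (f : ℕ → M) (a b : ℕ) :
    ∑ i ∈ Finset.range (a * b), f i
      = ∑ r ∈ Finset.range a, ∑ j ∈ Finset.range b, f (r * b + j) := by
  induction a with
  | zero => simp
  | succ a ih =>
    rw [Nat.succ_mul, Finset.sum_range_add, ih, Finset.sum_range_succ]

private lemma aux_natnorm (p : ℕ) [Fact p.Prime] {K : Type*} [NontriviallyNormedField K]
    [Algebra ℚ_[p] K] (hiso : ∀ q : ℚ_[p], ‖algebraMap ℚ_[p] K q‖ = ‖q‖)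
    (k : ℕ) (hk : 0 < k) :
    1 / (k:ℝ) ≤ ‖(k : K)‖ := by
  have h1 : ((k:ℕ) : K) = algebraMap ℚ_[p] K ((k:ℕ) : ℚ_[p]) := by simp
  rw [h1, hiso]
  have hk0 : ((k:ℕ) : ℚ_[p]) ≠ 0 := by exact_mod_cast hk.ne'
  rw [Padic.norm_eq_zpow_neg_valuation hk0, Padic.valuation_natCast]
  have hdvd : p ^ padicValNat p k ∣ k := pow_padicValNat_dvd
  have hle : (p:ℝ) ^ padicValNat p k ≤ (k:ℝ) := by
    exact_mod_cast Nat.le_of_dvd hk hdvd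
  have hp : (1:ℝ) < p := by exact_mod_cast (Fact.out : p.Prime).one_lt
  rw [zpow_neg, zpow_natCast, one_div]
  exact inv_anti₀ (by positivity) hle

private lemma aux_log_bound {K : Type*} [NontriviallyNormedField K]
    [IsUltrametricDist K]
    (logp : K → K)
    (hlog_series : ∀ x : K, ‖x - 1‖ < 1 →
      HasSum (fun n : ℕ => (-1) ^ n * (x - 1) ^ (n + 1) / (n + 1 : K)) (logp x))
    (hnat : ∀ k : ℕ, 0 < k → 1 / (k:ℝ) ≤ ‖(k : K)‖)
    (u : K) (hu : ‖u‖ ≤ 1/2) : ‖logp (1 - u)‖ ≤ ‖u‖ := by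
  have h1 : ‖(1 - u) - 1‖ < 1 := by
    simpa using lt_of_le_of_lt hu (by norm_num)
  have hs := hlog_series (1 - u) h1
  rw [← hs.tsum_eq]
  apply IsUltrametricDist.norm_tsum_le_of_forall_le_of_nonneg (norm_nonneg u)
  intro k
  have hden : 1 / ((k:ℝ)+1) ≤ ‖((k:K) + 1)‖ := by
    have := hnat (k+1) k.succ_pos
    push_cast at this ⊢
    exact this
  have hpos : (0:ℝ) < 1 / ((k:ℝ)+1) := by positivity
  have hkey : ‖u‖^k * ((k:ℝ)+1) ≤ 1 := by
    calc ‖u‖^k * ((k:ℝ)+1) ≤ (1/2)^k * ((k:ℝ)+1) := by gcongr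
      _ ≤ 1 := by
          rw [div_pow, one_pow, div_mul_eq_mul_div, div_le_one (by positivity), one_mul]
          have h : k + 1 ≤ 2 ^ k := Nat.lt_two_pow_self (n := k)
          exact_mod_cast h
  calc ‖(-1:K) ^ k * ((1-u) - 1) ^ (k + 1) / ((k:K) + 1)‖
      = ‖u‖^(k+1) / ‖(k:K)+1‖ := by
        rw [norm_div, norm_mul, norm_pow, norm_pow]
        simp [norm_neg]
    _ ≤ ‖u‖^(k+1) / (1/((k:ℝ)+1)) := by gcongr
    _ = ‖u‖ * (‖u‖^k * ((k:ℝ)+1)) := by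
        rw [div_div_eq_mul_div, div_one]; ring
    _ ≤ ‖u‖ * 1 := by gcongr
    _ = ‖u‖ := mul_one _

private lemma aux_w_bound {K : Type*} [NontriviallyNormedField K]
    [IsUltrametricDist K]
    (logp : K → K)
    (hlog_series : ∀ x : K, ‖x - 1‖ < 1 →
      HasSum (fun n : ℕ => (-1) ^ n * (x - 1) ^ (n + 1) / (n + 1 : K)) (logp x))
    (hnat : ∀ k : ℕ, 0 < k → 1 / (k:ℝ) ≤ ‖(k : K)‖)
    (y ε : K) (hy : 1 ≤ ‖y‖) (hε : ‖ε‖ ≤ 1/2) :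
    ‖(y - ε) * logp (1 - ε/y) + ε‖ ≤ 2 * ‖ε‖^2 := by
  have hlogb : ∀ u : K, ‖u‖ ≤ 1/2 → ‖logp (1 - u)‖ ≤ ‖u‖ :=
    aux_log_bound logp hlog_series hnat
  have hy0 : y ≠ 0 := by intro h; rw [h, norm_zero] at hy; linarith
  set u : K := ε / y with hu_def
  have hnu : ‖u‖ = ‖ε‖ / ‖y‖ := norm_div ε y
  have hule : ‖u‖ ≤ ‖ε‖ := by
    rw [hnu]; exact div_le_self (norm_nonneg ε) hy
  have huh : ‖u‖ ≤ 1/2 := hule.trans hε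
  set L : K := logp (1 - u) with hL_def
  have hyu : y * u = ε := by rw [hu_def]; field_simp
  have hid : (y - ε) * L + ε = y * (L + u) - ε * L := by linear_combination -hyu
  rw [hid]
  have h2 : ‖ε * L‖ ≤ ‖ε‖^2 := by
    rw [norm_mul, sq]
    gcongr
    exact (hlogb u huh).trans hule
  have h3 : ‖y * (L + u)‖ ≤ 2 * ‖ε‖^2 := by
    have h1 : ‖(1 - u) - 1‖ < 1 := by simpa using lt_of_le_of_lt huh (by norm_num)
    have hs := hlog_series (1 - u) h1
    have hf : (fun n : ℕ => (-1:K) ^ n * ((1-u) - 1) ^ (n + 1) / ((n:K) + 1))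
        = fun n : ℕ => -(u ^ (n+1)) / ((n:K) + 1) := by
      funext n
      have ha : ((1:K)-u) - 1 = -u := by ring
      have hb : (-1:K)^n * (-u)^(n+1) = -(u^(n+1)) := by
        rw [show (-u : K) = (-1) * u by ring, mul_pow, ← mul_assoc, ← pow_add,
          show n + (n+1) = 2*n+1 by ring, pow_succ, pow_mul]
        norm_num
      rw [ha, hb]
    rw [hf] at hs
    have hs2 : HasSum (fun n : ℕ => -(u ^ (n+1+1)) / (((n+1 : ℕ):K) + 1)) (L + u) := by
      apply (hasSum_nat_add_iff (f := fun n : ℕ => -(u ^ (n+1)) / ((n:K) + 1)) 1).mpr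
      convert hs using 1
      · rfl
      · rw [Finset.sum_range_one, hL_def]; push_cast; ring
    have hs3 := hs2.mul_left y
    rw [← hs3.tsum_eq]
    apply IsUltrametricDist.norm_tsum_le_of_forall_le_of_nonneg (by positivity)
    intro k
    have hden : 1 / ((k:ℝ)+2) ≤ ‖(((k+1:ℕ)):K) + 1‖ := by
      have h := hnat (k+2) (by omega)
      push_cast at h ⊢
      rw [show ((k:K)+1+1) = (k:K)+2 by ring]
      exact h
    have hpos : (0:ℝ) < 1 / ((k:ℝ)+2) := by positivity
    have hkey : ‖u‖^k * ((k:ℝ)+2) ≤ 2 := by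
      have h : ((k:ℝ)+2) ≤ 2^(k+1) := by
        exact_mod_cast (Nat.lt_two_pow_self (n := k+1) : k+2 ≤ 2^(k+1))
      calc ‖u‖^k * ((k:ℝ)+2) ≤ (1/2)^k * (2^(k+1)) := by gcongr
        _ = 2 := by
            rw [div_pow, one_pow, pow_succ]
            field_simp
    have hyu2 : ‖y‖ * ‖u‖^2 ≤ ‖ε‖^2 := by
      rw [hnu, div_pow, mul_div_assoc', div_le_iff₀ (by positivity)]
      have hyy : ‖y‖ ≤ ‖y‖^2 := by nlinarith [norm_nonneg y]
      nlinarith [mul_le_mul_of_nonneg_right hyy (sq_nonneg ‖ε‖)]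
    calc ‖y * (-(u ^ (k+1+1)) / (((k+1:ℕ):K) + 1))‖
        = ‖y‖ * ‖u‖^(k+2) / ‖((k+1:ℕ):K) + 1‖ := by
          rw [norm_mul, norm_div, norm_neg, norm_pow, mul_div_assoc]
      _ ≤ ‖y‖ * ‖u‖^(k+2) / (1/((k:ℝ)+2)) := by gcongr
      _ = (‖y‖ * ‖u‖^2) * (‖u‖^k * ((k:ℝ)+2)) := by
          rw [div_div_eq_mul_div, div_one]; ring
      _ ≤ ‖ε‖^2 * 2 := mul_le_mul hyu2 hkey (by positivity) (by positivity)
      _ = 2 * ‖ε‖^2 := by ring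
  calc ‖y * (L + u) - ε * L‖ ≤ max ‖y * (L+u)‖ ‖ε * L‖ := by
        rw [sub_eq_add_neg]
        simpa [norm_neg] using IsUltrametricDist.norm_add_le_max (y * (L+u)) (-(ε * L))
    _ ≤ 2 * ‖ε‖^2 := max_le h3 (h2.trans (by nlinarith [sq_nonneg ‖ε‖]))

/-- Reflection formula for Kashio's `p`-adic log-gamma function
`LΓ_p(x) = ∫_{ℤ_p} φ_p(x+t) dt`: for all `x ∈ ℂ_p`,
`LΓ_p(1-x) + LΓ_p(x) = 0`. -/
theorem kashio_log_gamma_reflection (p : ℕ) [Fact p.Prime] (K : Type*)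
    [NontriviallyNormedField K] [CompleteSpace K] [IsAlgClosed K] [IsUltrametricDist K]
    [Algebra ℚ_[p] K] (hiso : ∀ q : ℚ_[p], ‖algebraMap ℚ_[p] K q‖ = ‖q‖)
    (logp : K → K)
    (hlog_an : ∀ x : K, x ≠ 0 → AnalyticAt K logp x)
    (hlog_mul : ∀ x y : K, x ≠ 0 → y ≠ 0 → logp (x * y) = logp x + logp y)
    (hlog_p : logp (p : K) = 0)
    (hlog_series : ∀ x : K, ‖x - 1‖ < 1 →
      HasSum (fun n : ℕ => (-1) ^ n * (x - 1) ^ (n + 1) / (n + 1 : K)) (logp x))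
    (LG : K → K)
    (hLG : ∀ x : K,
      Tendsto (fun n : ℕ => ((p : K) ^ n)⁻¹ * ∑ j ∈ Finset.range (p ^ n),
          (if 1 ≤ ‖x + (j : K)‖ then (x + (j : K)) * (logp (x + (j : K)) - 1) else 0))
        atTop (nhds (LG x)))
    (x : K) :
    LG (1 - x) + LG x = 0 := by
  classical
  have hp : p.Prime := Fact.out
  have hp1 : 1 < p := hp.one_lt
  have hp2 : 2 ≤ (p:ℝ) := by exact_mod_cast hp.two_le
  haveI : CharZero K := charZero_of_injective_algebraMap (algebraMap ℚ_[p] K).injective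
  set r : ℝ := (p:ℝ)⁻¹ with hr_def
  have hr0 : 0 < r := by positivity
  have hr1 : r < 1 := by
    rw [hr_def, inv_lt_one_iff₀]; right; linarith
  have hrh : r ≤ 1/2 := by
    rw [hr_def]
    rw [inv_le_comm₀ (by linarith) (by norm_num)]
    linarith
  have hpK : ‖(p:K)‖ = r := by
    rw [show ((p:ℕ):K) = algebraMap ℚ_[p] K ((p:ℕ):ℚ_[p]) by simp, hiso]
    exact_mod_cast Padic.norm_p
  have hpK0 : (p:K) ≠ 0 := Nat.cast_ne_zero.mpr hp.pos.ne'
  have hεn : ∀ n : ℕ, ‖(p:K)^n‖ = r^n := fun n => by rw [norm_pow, hpK]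
  have hεsmall : ∀ n : ℕ, 1 ≤ n → r^n ≤ 1/2 := by
    intro n hn
    calc r^n ≤ r^1 := pow_le_pow_of_le_one hr0.le hr1.le hn
      _ = r := pow_one r
      _ ≤ 1/2 := hrh
  have hεlt1 : ∀ n : ℕ, 1 ≤ n → r^n < 1 := fun n hn => lt_of_le_of_lt (hεsmall n hn) (by norm_num)
  have hnat : ∀ k : ℕ, 0 < k → 1 / (k:ℝ) ≤ ‖(k : K)‖ := aux_natnorm p hiso
  have hlogb : ∀ u : K, ‖u‖ ≤ 1/2 → ‖logp (1 - u)‖ ≤ ‖u‖ :=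
    aux_log_bound logp hlog_series hnat
  have hwb : ∀ y ε : K, 1 ≤ ‖y‖ → ‖ε‖ ≤ 1/2 →
      ‖(y - ε) * logp (1 - ε/y) + ε‖ ≤ 2 * ‖ε‖^2 :=
    aux_w_bound logp hlog_series hnat
  -- logarithm facts
  have hlog1 : logp 1 = 0 := by
    have h := hlog_mul 1 1 one_ne_zero one_ne_zero
    rw [mul_one] at h
    exact (left_eq_add.mp h)
  have hlogm1 : logp (-1) = 0 := by
    have h := hlog_mul (-1) (-1) (by norm_num) (by norm_num)
    rw [neg_mul_neg, one_mul, hlog1] at h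
    exact add_self_eq_zero.mp h.symm
  have hlogneg : ∀ y : K, y ≠ 0 → logp (-y) = logp y := by
    intro y hy
    rw [show -y = (-1)*y by ring, hlog_mul _ _ (by norm_num) hy, hlogm1, zero_add]
  -- ultrametric stability
  have hstab : ∀ a b : K, ‖b‖ < ‖a‖ → ‖a + b‖ = ‖a‖ := by
    intro a b h
    rw [IsUltrametricDist.norm_add_eq_max_of_norm_ne_norm (x := a) (y := b) h.ne']
    exact max_eq_left h.le
  -- the A sequence
  set A : ℕ → K := fun n => ∑ j ∈ Finset.range (p^n),
      (if 1 ≤ ‖x + (j:K)‖ then logp (x + (j:K)) else 0) with hA_def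
  -- recursion bound
  have hArec : ∀ n : ℕ, 1 ≤ n → ‖A (n+1)‖ ≤ max (r * ‖A n‖) (r^n) := by
    intro n hn
    have hsplit : A (n+1) = (p:K) * A n + ∑ s ∈ Finset.range p, ∑ j ∈ Finset.range (p^n),
        ((if 1 ≤ ‖x + ((s*p^n + j : ℕ):K)‖ then logp (x + ((s*p^n+j:ℕ):K)) else 0)
          - (if 1 ≤ ‖x + (j:K)‖ then logp (x + (j:K)) else 0)) := by
      simp only [hA_def]
      rw [show p^(n+1) = p * p^n from pow_succ' p n,
        aux_sum_range_mul (fun i => if 1 ≤ ‖x + (i:K)‖ then logp (x + (i:K)) else 0) p (p^n)]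
      simp only [Finset.sum_sub_distrib, Finset.sum_const, Finset.card_range, nsmul_eq_mul]
      ring
    rw [hsplit]
    refine (IsUltrametricDist.norm_add_le_max _ _).trans (max_le_max ?_ ?_)
    · rw [norm_mul, hpK]
    · apply IsUltrametricDist.norm_sum_le_of_forall_le_of_nonneg (by positivity)
      intro s hs
      apply IsUltrametricDist.norm_sum_le_of_forall_le_of_nonneg (by positivity)
      intro j hj
      have hcast : ((s*p^n + j : ℕ):K) = (j:K) + (s:K) * (p:K)^n := by push_cast; ring
      set c : K := (s:K) * (p:K)^n with hc_def
      have hcnorm : ‖c‖ ≤ r^n := by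
        rw [hc_def, norm_mul, hεn]
        calc ‖(s:K)‖ * r^n ≤ 1 * r^n := by
              gcongr
              exact IsUltrametricDist.norm_natCast_le_one K s
          _ = r^n := one_mul _
      have hclt1 : ‖c‖ < 1 := lt_of_le_of_lt hcnorm (hεlt1 n hn)
      by_cases hgood : 1 ≤ ‖x + (j:K)‖
      · set y : K := x + (j:K) with hy_def
        have hy0 : y ≠ 0 := by
          intro h; rw [h, norm_zero] at hgood; linarith
        have hyc : ‖y + c‖ = ‖y‖ := hstab y c (lt_of_lt_of_le hclt1 hgood)
        have hgood2 : 1 ≤ ‖x + ((s*p^n + j : ℕ):K)‖ := by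
          rw [hcast, ← add_assoc, ← hy_def, hyc]; exact hgood
        rw [if_pos hgood, if_pos hgood2]
        have hcy : ‖c / y‖ < 1 := by
          rw [norm_div]
          calc ‖c‖ / ‖y‖ ≤ ‖c‖ / 1 := by gcongr
            _ = ‖c‖ := div_one _
            _ < 1 := hclt1
        have h1cy : (1 : K) + c/y ≠ 0 := by
          intro h
          have h2 : ‖(1:K) + c/y‖ = 1 := by
            rw [hstab 1 (c/y) (by rw [norm_one]; exact hcy)]; exact norm_one
          rw [h, norm_zero] at h2; norm_num at h2
        have hdecomp : x + ((s*p^n + j : ℕ):K) = y * (1 + c/y) := by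
          rw [hcast, ← add_assoc, ← hy_def]
          field_simp
        rw [hdecomp, hlog_mul y (1 + c/y) hy0 h1cy]
        rw [add_sub_cancel_left]
        have := hlogb (-(c/y)) (by
          rw [norm_neg]
          calc ‖c/y‖ ≤ ‖c‖ := by
                rw [norm_div]
                exact div_le_self (norm_nonneg c) hgood |>.trans (le_refl _)
            _ ≤ r^n := hcnorm
            _ ≤ 1/2 := hεsmall n hn)
        rw [sub_neg_eq_add] at this
        refine this.trans ?_
        rw [norm_neg, norm_div]
        calc ‖c‖ / ‖y‖ ≤ ‖c‖ / 1 := by gcongr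
          _ = ‖c‖ := div_one _
          _ ≤ r^n := hcnorm
      · have hbad2 : ¬ (1 ≤ ‖x + ((s*p^n + j : ℕ):K)‖) := by
          rw [hcast, ← add_assoc]
          intro h
          push_neg at hgood
          have := (IsUltrametricDist.norm_add_le_max (x + (j:K)) c).trans_lt
            (max_lt hgood hclt1)
          linarith
        rw [if_neg hgood, if_neg hbad2, sub_zero, norm_zero]
        positivity
  -- geometric bound on A
  set C : ℝ := max ‖A 1‖ 1 with hC_def
  have hC1 : 1 ≤ C := le_max_right _ _
  have hC0 : 0 ≤ C := by linarith
  have hAbd : ∀ m : ℕ, ‖A (m+1)‖ ≤ C * r^m := by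
    intro m
    induction m with
    | zero => rw [pow_zero, mul_one]; exact le_max_left _ _
    | succ m ih =>
      refine (hArec (m+1) (by omega)).trans (max_le ?_ ?_)
      · calc r * ‖A (m+1)‖ ≤ r * (C * r^m) := by gcongr
          _ = C * r^(m+1) := by ring
      · calc r^(m+1) = 1 * r^(m+1) := (one_mul _).symm
          _ ≤ C * r^(m+1) := by gcongr
  -- the correction term W
  set W : ℕ → K := fun n => ∑ j ∈ Finset.range (p^n),
      (if 1 ≤ ‖x + (j:K)‖ then
        ((x + (j:K) - (p:K)^n) * logp (1 - (p:K)^n/(x + (j:K))) + (p:K)^n) else 0) with hW_def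
  have hWbd : ∀ n : ℕ, 1 ≤ n → ‖W n‖ ≤ 2 * (r^n)^2 := by
    intro n hn
    apply IsUltrametricDist.norm_sum_le_of_forall_le_of_nonneg (by positivity)
    intro j hj
    by_cases hgood : 1 ≤ ‖x + (j:K)‖
    · rw [if_pos hgood]
      have := hwb (x + (j:K)) ((p:K)^n) hgood (by rw [hεn]; exact hεsmall n hn)
      rw [hεn] at this
      exact this
    · rw [if_neg hgood, norm_zero]; positivity
  -- the key identity
  have hkey : ∀ n : ℕ, 1 ≤ n →
      (∑ j ∈ Finset.range (p^n),
        (if 1 ≤ ‖1 - x + (j:K)‖ then (1 - x + (j:K)) * (logp (1 - x + (j:K)) - 1) else 0))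
      + (∑ j ∈ Finset.range (p^n),
        (if 1 ≤ ‖x + (j:K)‖ then (x + (j:K)) * (logp (x + (j:K)) - 1) else 0))
      = (p:K)^n * A n - W n := by
    intro n hn
    have hrefl := Finset.sum_range_reflect
      (fun j => if 1 ≤ ‖1 - x + (j:K)‖ then (1 - x + (j:K)) * (logp (1 - x + (j:K)) - 1) else 0)
      (p^n)
    rw [← hrefl]
    simp only [hA_def, hW_def, Finset.mul_sum]
    rw [← Finset.sum_sub_distrib, ← Finset.sum_add_distrib]
    apply Finset.sum_congr rfl
    intro j hj
    rw [Finset.mem_range] at hj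
    have hpn1 : 1 ≤ p^n := Nat.one_le_pow _ _ hp.pos
    have hj1 : j ≤ p^n - 1 := by omega
    have hcast : ((p^n - 1 - j : ℕ):K) = (p:K)^n - 1 - (j:K) := by
      rw [Nat.cast_sub hj1, Nat.cast_sub hpn1, Nat.cast_pow]
      push_cast
      ring
    rw [hcast]
    have harg : 1 - x + ((p:K)^n - 1 - (j:K)) = (p:K)^n - (x + (j:K)) := by ring
    rw [harg]
    set ε : K := (p:K)^n with hε_def
    set y : K := x + (j:K) with hy_def
    have hεnorm : ‖ε‖ = r^n := hεn n
    have hεlt : ‖ε‖ < 1 := by rw [hεnorm]; exact hεlt1 n hn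
    by_cases hgood : 1 ≤ ‖y‖
    · have hy0 : y ≠ 0 := by intro h; rw [h, norm_zero] at hgood; linarith
      have hyε : ‖ε - y‖ = ‖y‖ := by
        rw [norm_sub_rev, sub_eq_add_neg, hstab y (-ε) (by rw [norm_neg]; linarith)]
      have hgood2 : 1 ≤ ‖ε - y‖ := by rw [hyε]; exact hgood
      rw [if_pos hgood, if_pos hgood2, if_pos hgood, if_pos hgood]
      have hyε0 : y - ε ≠ 0 := by
        intro h
        have : ‖ε - y‖ = 0 := by rw [norm_sub_rev, h, norm_zero]
        rw [this] at hgood2; linarith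
      have hεy : ‖ε/y‖ < 1 := by
        rw [norm_div]
        calc ‖ε‖ / ‖y‖ ≤ ‖ε‖ / 1 := by gcongr
          _ = ‖ε‖ := div_one _
          _ < 1 := hεlt
      have h1εy : (1:K) - ε/y ≠ 0 := by
        intro h
        have h2 : ‖(1:K) - ε/y‖ = 1 := by
          rw [sub_eq_add_neg, hstab 1 (-(ε/y)) (by rw [norm_one, norm_neg]; exact hεy)]
          exact norm_one
        rw [h, norm_zero] at h2; norm_num at h2
      have hlogeq : logp (ε - y) = logp y + logp (1 - ε/y) := by
        rw [show ε - y = -(y - ε) by ring, hlogneg _ (by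
          intro h; exact hyε0 h),
          show y - ε = y * (1 - ε/y) by field_simp,
          hlog_mul y (1 - ε/y) hy0 h1εy]
      rw [hlogeq]
      ring
    · have hbad2 : ¬ (1 ≤ ‖ε - y‖) := by
        intro h
        push_neg at hgood
        have := (IsUltrametricDist.norm_add_le_max ε (-y)).trans_lt
          (by rw [norm_neg]; exact max_lt hεlt hgood)
        rw [← sub_eq_add_neg] at this
        linarith
      rw [if_neg hgood, if_neg hbad2, if_neg hgood, if_neg hgood]
      simp
  -- limits
  have hT : Tendsto (fun n : ℕ =>
      (((p : K) ^ n)⁻¹ * ∑ j ∈ Finset.range (p ^ n),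
          (if 1 ≤ ‖(1-x) + (j : K)‖ then ((1-x) + (j : K)) * (logp ((1-x) + (j : K)) - 1) else 0))
      + (((p : K) ^ n)⁻¹ * ∑ j ∈ Finset.range (p ^ n),
          (if 1 ≤ ‖x + (j : K)‖ then (x + (j : K)) * (logp (x + (j : K)) - 1) else 0)))
      atTop (nhds (LG (1-x) + LG x)) := (hLG (1-x)).add (hLG x)
  have hT0 : Tendsto (fun n : ℕ =>
      (((p : K) ^ n)⁻¹ * ∑ j ∈ Finset.range (p ^ n),
          (if 1 ≤ ‖(1-x) + (j : K)‖ then ((1-x) + (j : K)) * (logp ((1-x) + (j : K)) - 1) else 0))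
      + (((p : K) ^ n)⁻¹ * ∑ j ∈ Finset.range (p ^ n),
          (if 1 ≤ ‖x + (j : K)‖ then (x + (j : K)) * (logp (x + (j : K)) - 1) else 0)))
      atTop (nhds 0) := by
    apply squeeze_zero_norm' (a := fun n : ℕ => (max (C * p) 2) * r^n)
    · filter_upwards [eventually_ge_atTop 1] with n hn
      have hεK0 : ((p:K)^n) ≠ 0 := pow_ne_zero n hpK0
      have heq : (((p : K) ^ n)⁻¹ * ∑ j ∈ Finset.range (p ^ n),
          (if 1 ≤ ‖(1-x) + (j : K)‖ then ((1-x) + (j : K)) * (logp ((1-x) + (j : K)) - 1) else 0))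
          + (((p : K) ^ n)⁻¹ * ∑ j ∈ Finset.range (p ^ n),
          (if 1 ≤ ‖x + (j : K)‖ then (x + (j : K)) * (logp (x + (j : K)) - 1) else 0))
          = A n - ((p:K)^n)⁻¹ * W n := by
        rw [← mul_add, hkey n hn, mul_sub, ← mul_assoc, inv_mul_cancel₀ hεK0, one_mul]
      rw [heq]
      have hb1 : ‖A n‖ ≤ C * p * r^n := by
        obtain ⟨m, rfl⟩ : ∃ m, n = m + 1 := ⟨n-1, by omega⟩
        refine (hAbd m).trans (le_of_eq ?_)
        have hpne : (p:ℝ) ≠ 0 := by positivity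
        rw [hr_def, pow_succ]
        field_simp
      have hb2 : ‖((p:K)^n)⁻¹ * W n‖ ≤ 2 * r^n := by
        rw [norm_mul, norm_inv, hεn]
        calc (r^n)⁻¹ * ‖W n‖ ≤ (r^n)⁻¹ * (2 * (r^n)^2) := by
              gcongr
              exact hWbd n hn
          _ = 2 * r^n := by
              field_simp
      rw [sub_eq_add_neg]
      refine (IsUltrametricDist.norm_add_le_max _ _).trans ?_
      rw [norm_neg]
      apply max_le
      · exact hb1.trans (by gcongr; exact le_max_left _ _)
      · exact hb2.trans (by gcongr; exact le_max_right _ _)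
    · have := (tendsto_pow_atTop_nhds_zero_of_lt_one hr0.le hr1).const_mul (max (C * p) 2)
      simpa using this
  have := tendsto_nhds_unique hT hT0
  exact this
end

section
/- Let x ∈ C_p with |x|_p ≤ 1, and suppose there is an integer α with 0 ≤ α ≤ p-1 and |x - α|_p < 1. Then the Volkenborn integral ρ_p(x) := ∫_{Z_p} (x+t)·χ(x+t) dt equals x - x/p + α/p - ⌈α/p⌉, where χ is the characteristic function of {y : |y|_p ≥ 1} and ⌈·⌉ is the integer ceiling. -/
open Filter

/-- For `‖x‖ ≤ 1` with `‖x - α‖ < 1` for an integer `0 ≤ α ≤ p-1`, the Volkenborn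
integral `ρ_p(x) = ∫_{ℤ_p} (x+t) χ(x+t) dt` equals `x - x/p + α/p - ⌈α/p⌉`. -/
theorem rho_p_of_residue_in_Fp (p : ℕ) [Fact p.Prime] (K : Type*)
    [NontriviallyNormedField K] [CompleteSpace K] [IsAlgClosed K] [IsUltrametricDist K]
    [Algebra ℚ_[p] K] (hiso : ∀ q : ℚ_[p], ‖algebraMap ℚ_[p] K q‖ = ‖q‖)
    (x : K) (hx : ‖x‖ ≤ 1) (α : ℤ) (hα0 : 0 ≤ α) (hα1 : α ≤ (p : ℤ) - 1)
    (hclose : ‖x - (α : K)‖ < 1) :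
    Tendsto (fun n : ℕ => ((p : K) ^ n)⁻¹ * ∑ j ∈ Finset.range (p ^ n),
        (if 1 ≤ ‖x + (j : K)‖ then x + (j : K) else 0))
      atTop (nhds (x - x / (p : K) + (α : K) / (p : K) - ((⌈(α : ℚ) / (p : ℚ)⌉ : ℤ) : K))) := by
  have hp : p.Prime := Fact.out
  have hp0 : 0 < p := hp.pos
  set a : ℕ := α.toNat with ha_def
  have haα : ((a : ℤ)) = α := Int.toNat_of_nonneg hα0
  have ha_lt : a < p := by omega
  set r : ℕ := if a = 0 then 0 else p - a with hr_def
  have hr_lt : r < p := by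
    rcases Nat.eq_zero_or_pos a with h | h
    · simp [hr_def, h, hp0]
    · simp only [hr_def, if_neg h.ne']; omega
  have hinj : Function.Injective (algebraMap ℚ_[p] K) := (algebraMap ℚ_[p] K).injective
  have hch : CharZero K := charZero_of_injective_algebraMap hinj
  have hPnorm : ‖(p : K)‖ = (p : ℝ)⁻¹ := by
    rw [← map_natCast (algebraMap ℚ_[p] K) p, hiso]
    exact Padic.norm_p
  have hP0 : (p : K) ≠ 0 := Nat.cast_ne_zero.mpr hp0.ne'
  have h2K : (2 : K) ≠ 0 := two_ne_zero
  have hPlt : ‖(p : K)‖ < 1 := by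
    rw [hPnorm]
    have : (1 : ℝ) < p := by exact_mod_cast hp.one_lt
    exact inv_lt_one_of_one_lt₀ this
  have hintnorm : ∀ m : ℤ, ‖((m : K))‖ = ‖((m : ℚ_[p]))‖ := by
    intro m; rw [← map_intCast (algebraMap ℚ_[p] K) m, hiso]
  -- divisibility versus residues
  have hdvd_nat : ∀ j : ℕ, ((p : ℤ) ∣ (α + j)) ↔ p ∣ (a + j) := by
    intro j
    rw [← haα]
    constructor
    · intro h; exact_mod_cast h
    · intro h; exact_mod_cast h
  have hmod_iff : ∀ j : ℕ, p ∣ (a + j) ↔ j % p = r := by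
    intro j
    have hj : j % p < p := Nat.mod_lt _ hp0
    have hmod : (a + j) % p = (a + j % p) % p := by
      rw [Nat.add_mod, Nat.mod_eq_of_lt ha_lt]
    constructor
    · intro hd
      have h0 : (a + j % p) % p = 0 := by
        rw [← hmod]; exact Nat.mod_eq_zero_of_dvd hd
      obtain ⟨c, hc⟩ := Nat.dvd_of_mod_eq_zero h0
      have hc2 : c < 2 := by
        have hlt : p * c < p * 2 := by rw [← hc]; omega
        exact Nat.lt_of_mul_lt_mul_left hlt
      rcases Nat.eq_zero_or_pos a with h | h
      · have hr0 : r = 0 := by simp [hr_def, h]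
        interval_cases c <;> omega
      · have hrv : r = p - a := by simp only [hr_def, if_neg h.ne']
        interval_cases c <;> omega
    · intro hjr
      apply Nat.dvd_of_mod_eq_zero
      rw [hmod, hjr]
      rcases Nat.eq_zero_or_pos a with h | h
      · simp [hr_def, h]
      · have hra : a + r = p := by simp only [hr_def, if_neg h.ne']; omega
        rw [hra, Nat.mod_self]
  -- norm condition
  have hcond : ∀ j : ℕ, (1 ≤ ‖x + (j : K)‖ ↔ ¬ ((p : ℤ) ∣ (α + j))) := by
    intro j
    have hxj : x + (j : K) = (x - (α : K)) + (((α + j : ℤ)) : K) := by push_cast; ring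
    have hN : ‖(((α + j : ℤ)) : K)‖ = ‖(((α + j : ℤ)) : ℚ_[p])‖ := hintnorm _
    constructor
    · intro h1 hd
      have hlt : ‖x + (j : K)‖ < 1 := by
        rw [hxj]
        refine lt_of_le_of_lt (IsUltrametricDist.norm_add_le_max _ _) (max_lt hclose ?_)
        rw [hN]
        exact Padic.norm_intCast_lt_one_iff.mpr hd
      linarith
    · intro hd
      have hN1 : (1 : ℝ) ≤ ‖(((α + j : ℤ)) : K)‖ := by
        rw [hN]
        by_contra h
        exact hd (Padic.norm_intCast_lt_one_iff.mp (lt_of_not_ge h))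
      have hle : ‖(((α + j : ℤ)) : K)‖ ≤ max ‖x + (j : K)‖ ‖x - (α : K)‖ := by
        have h' : (((α + j : ℤ)) : K) = (x + (j : K)) + -(x - (α : K)) := by push_cast; ring
        rw [h']
        refine le_trans (IsUltrametricDist.norm_add_le_max _ _) ?_
        rw [norm_neg]
      rcases max_cases ‖x + (j : K)‖ ‖x - (α : K)‖ with ⟨he, _⟩ | ⟨he, _⟩ <;>
        rw [he] at hle <;> linarith
  -- Gauss sums
  set G : ℕ → K := fun N => ∑ j ∈ Finset.range N, (j : K) with hG_def
  have hG : ∀ N : ℕ, G N * 2 = (N : K) * (N : K) - (N : K) := by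
    intro N
    induction N with
    | zero => simp [hG_def]
    | succ N ih =>
      simp only [hG_def, Finset.sum_range_succ] at ih ⊢
      push_cast
      linear_combination ih
  -- key eventual formula
  have key : ∀ n : ℕ, 1 ≤ n →
      ((p : K) ^ n)⁻¹ * ∑ j ∈ Finset.range (p ^ n),
          (if 1 ≤ ‖x + (j : K)‖ then x + (j : K) else 0)
        = (x - x / (p : K) - (r : K) / (p : K)) + (p : K) ^ (n - 1) * (((p : K) - 1) / 2) := by
    intro n hn
    have hpow : (p : ℕ) ^ n = p ^ (n - 1) * p := by
      rw [← pow_succ]; congr 1; omega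
    have hsummand : ∀ j ∈ Finset.range (p ^ n),
        (if 1 ≤ ‖x + (j : K)‖ then x + (j : K) else 0)
          = (x + (j : K)) - (if j % p = r then x + (j : K) else 0) := by
      intro j _
      by_cases h : j % p = r
      · have hdvd : (p : ℤ) ∣ (α + j) := (hdvd_nat j).mpr ((hmod_iff j).mpr h)
        rw [if_neg (fun h1 => (hcond j).mp h1 hdvd), if_pos h, sub_self]
      · have hnd : ¬ ((p : ℤ) ∣ (α + j)) := fun hd => h ((hmod_iff j).mp ((hdvd_nat j).mp hd))
        rw [if_pos ((hcond j).mpr hnd), if_neg h, sub_zero]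
    rw [Finset.sum_congr rfl hsummand, Finset.sum_sub_distrib, ← Finset.sum_filter]
    have himg : (Finset.range (p ^ n)).filter (fun j => j % p = r)
        = (Finset.range (p ^ (n - 1))).image (fun k => p * k + r) := by
      ext j
      simp only [Finset.mem_filter, Finset.mem_image, Finset.mem_range]
      constructor
      · rintro ⟨hj, hjr⟩
        refine ⟨j / p, ?_, ?_⟩
        · rw [Nat.div_lt_iff_lt_mul hp0, ← hpow]; exact hj
        · rw [← hjr]; exact Nat.div_add_mod j p
      · rintro ⟨k, hk, rfl⟩
        refine ⟨?_, ?_⟩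
        · calc p * k + r < p * k + p := by omega
            _ = p * (k + 1) := by ring
            _ ≤ p * p ^ (n - 1) := Nat.mul_le_mul_left _ hk
            _ = p ^ n := by rw [hpow]; ring
        · rw [Nat.mul_add_mod, Nat.mod_eq_of_lt hr_lt]
    rw [himg, Finset.sum_image (fun k1 _ k2 _ h =>
      Nat.eq_of_mul_eq_mul_left hp0 (by omega))]
    have hsum1 : ∑ j ∈ Finset.range (p ^ n), (x + (j : K))
        = ((p ^ n : ℕ) : K) * x + G (p ^ n) := by
      rw [Finset.sum_add_distrib, Finset.sum_const, Finset.card_range, nsmul_eq_mul]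
    have hsum2 : ∑ k ∈ Finset.range (p ^ (n - 1)), (x + ((p * k + r : ℕ) : K))
        = ((p ^ (n - 1) : ℕ) : K) * x + (p : K) * G (p ^ (n - 1))
          + ((p ^ (n - 1) : ℕ) : K) * (r : K) := by
      rw [Finset.sum_add_distrib, Finset.sum_const, Finset.card_range, nsmul_eq_mul]
      have hc : ∀ k ∈ Finset.range (p ^ (n - 1)),
          ((p * k + r : ℕ) : K) = (p : K) * (k : K) + (r : K) := by
        intro k _; push_cast; ring
      rw [Finset.sum_congr rfl hc, Finset.sum_add_distrib, Finset.sum_const,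
        Finset.card_range, nsmul_eq_mul, ← Finset.mul_sum]
      ring
    rw [hsum1, hsum2]
    have hcast1 : ((p ^ n : ℕ) : K) = (p : K) ^ n := by push_cast; ring
    have hcast2 : ((p ^ (n - 1) : ℕ) : K) = (p : K) ^ (n - 1) := by push_cast; ring
    set M : K := (p : K) ^ (n - 1) with hM_def
    have hM0 : M ≠ 0 := pow_ne_zero _ hP0
    have hPn : (p : K) ^ n = (p : K) * M := by
      rw [hM_def, ← pow_succ']
      congr 1; omega
    have hg1 := hG (p ^ n)
    have hg2 := hG (p ^ (n - 1))
    rw [hcast1, hPn] at hg1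
    rw [hcast2] at hg2
    have hg1' : G (p ^ n) = ((p : K) * M * ((p : K) * M) - (p : K) * M) / 2 := by
      rw [eq_div_iff h2K]; linear_combination hg1
    have hg2' : G (p ^ (n - 1)) = (M * M - M) / 2 := by
      rw [eq_div_iff h2K]; linear_combination hg2
    rw [hcast1, hcast2, hPn, hg1', hg2']
    field_simp
    ring
  -- ceiling identity
  have hceil : (α + (r : ℤ)) = p * ⌈(α : ℚ) / (p : ℚ)⌉ := by
    rcases Nat.eq_zero_or_pos a with h | h
    · have hα' : α = 0 := by omega
      simp [hα', hr_def, h]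
    · have hr' : (r : ℤ) = p - α := by
        simp only [hr_def, if_neg h.ne']; push_cast; omega
      have hc1 : ⌈(α : ℚ) / (p : ℚ)⌉ = 1 := by
        have hppos : (0 : ℚ) < p := by exact_mod_cast hp0
        have hαpos : (0 : ℚ) < α := by exact_mod_cast (by omega : (0 : ℤ) < α)
        have hle : (α : ℚ) / p ≤ 1 := by
          rw [div_le_one hppos]
          exact_mod_cast (by omega : α ≤ (p : ℤ))
        rw [Int.ceil_eq_iff]
        push_cast
        constructor
        · have := div_pos hαpos hppos
          linarith
        · exact hle
      rw [hc1, mul_one, hr']; ring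
  have hcastK : (α : K) + (r : K) = (p : K) * ((⌈(α : ℚ) / (p : ℚ)⌉ : ℤ) : K) := by
    have := congrArg (fun z : ℤ => (z : K)) hceil
    push_cast at this
    convert this using 2 <;> push_cast <;> ring
  have hLK : x - x / (p : K) - (r : K) / (p : K)
      = x - x / (p : K) + (α : K) / (p : K) - ((⌈(α : ℚ) / (p : ℚ)⌉ : ℤ) : K) := by
    field_simp
    linear_combination -hcastK
  have htail : Tendsto (fun n : ℕ =>
      (x - x / (p : K) - (r : K) / (p : K)) + (p : K) ^ (n - 1) * (((p : K) - 1) / 2))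
      atTop (nhds (x - x / (p : K) - (r : K) / (p : K))) := by
    have h1 : Tendsto (fun n : ℕ => (p : K) ^ n) atTop (nhds 0) :=
      tendsto_pow_atTop_nhds_zero_of_norm_lt_one hPlt
    have h2 : Tendsto (fun n : ℕ => (p : K) ^ (n - 1)) atTop (nhds 0) :=
      h1.comp (tendsto_sub_atTop_nat 1)
    have h3 := Tendsto.add
      (tendsto_const_nhds (x := x - x / (p : K) - (r : K) / (p : K)) (f := atTop))
      (h2.mul_const (((p : K) - 1) / 2))
    simpa using h3
  rw [← hLK]
  refine Tendsto.congr' ?_ htail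
  filter_upwards [eventually_ge_atTop 1] with n hn
  exact (key n hn).symm
end

section
/- For x ∈ Z_p, the Volkenborn integral ρ_p(x) := ∫_{Z_p} (x+t)·χ(x+t) dt equals x - ⌈x/p⌉, where ⌈x/p⌉ is the p-adic limit of ⌈x_n/p⌉ over natural numbers x_n → x, and χ is the characteristic function of {y ∈ C_p : |y|_p ≥ 1}. -/
open Filter

open Finset

lemma aux_ceil (p m a : ℕ) (hp : 0 < p) (hap : a < p) (hd : p ∣ m + a) :
    (p:ℤ) * ⌈(m:ℚ)/(p:ℚ)⌉ = m + a := by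
  obtain ⟨q, hq⟩ := hd
  have hpQ : (0:ℚ) < p := by exact_mod_cast hp
  have hmq : (m:ℚ) + a = p * q := by exact_mod_cast hq
  have hapQ : (a:ℚ) < p := by exact_mod_cast hap
  have ha0 : (0:ℚ) ≤ a := by positivity
  have hceil : ⌈(m:ℚ)/(p:ℚ)⌉ = (q:ℤ) := by
    rw [Int.ceil_eq_iff]
    constructor
    · rw [lt_div_iff₀ hpQ]; push_cast; nlinarith
    · rw [div_le_iff₀ hpQ]; push_cast; nlinarith
  rw [hceil]
  exact_mod_cast hq.symm

lemma aux_mod (p r j : ℕ) (hr : r < p) :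
    p ∣ (r + j) ↔ j % p = (p - r) % p := by
  have hp : 0 < p := by omega
  have h1 : (r + j) % p = (r + j % p) % p := by
    conv_lhs => rw [show r + j = r + (p * (j / p) + j % p) by rw [Nat.div_add_mod]]
    rw [← Nat.add_assoc, Nat.add_comm r, Nat.add_assoc, Nat.mul_add_mod]
  have hj : j % p < p := Nat.mod_lt _ hp
  rcases lt_or_ge (r + j % p) p with h | h
  · rw [Nat.dvd_iff_mod_eq_zero, h1, Nat.mod_eq_of_lt h]
    rcases Nat.eq_zero_or_pos r with hr0 | hr0
    · subst hr0; simp [Nat.mod_self]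
    · rw [Nat.mod_eq_of_lt (by omega : p - r < p)]; omega
  · rw [Nat.dvd_iff_mod_eq_zero, h1, Nat.mod_eq_sub_mod h,
      Nat.mod_eq_of_lt (by omega : r + j % p - p < p)]
    rcases Nat.eq_zero_or_pos r with hr0 | hr0
    · subst hr0; simp [Nat.mod_self]; omega
    · rw [Nat.mod_eq_of_lt (by omega : p - r < p)]; omega

lemma aux_appr_tendsto (p : ℕ) [Fact p.Prime] (z : ℤ_[p]) :
    Tendsto (fun n => ((z.appr n : ℤ_[p]))) atTop (nhds z) := by
  have hp := Fact.out (p := p.Prime)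
  rw [tendsto_iff_norm_sub_tendsto_zero]
  have hb : ∀ n, ‖(z.appr n : ℤ_[p]) - z‖ ≤ ((p:ℝ)⁻¹)^n := by
    intro n
    rw [norm_sub_rev]
    have := (PadicInt.norm_le_pow_iff_mem_span_pow (z - (z.appr n : ℤ_[p])) n).2 (z.appr_spec n)
    rwa [zpow_neg, zpow_natCast, ← inv_pow] at this
  refine squeeze_zero (fun n => norm_nonneg _) hb ?_
  apply tendsto_pow_atTop_nhds_zero_of_lt_one (by positivity)
  rw [inv_lt_one_iff₀]
  right
  exact_mod_cast hp.one_lt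

lemma aux_gauss (K : Type*) [Field K] (m : ℕ) (hm : 1 ≤ m) :
    (2:K) * ∑ j ∈ range m, (j:K) = (m:K) * ((m:K) - 1) := by
  have h := Finset.sum_range_id_mul_two m
  calc (2:K) * ∑ j ∈ range m, (j:K) = (((∑ i ∈ range m, i) * 2 : ℕ) : K) := by push_cast; ring
  _ = ((m*(m-1) : ℕ) : K) := by rw [h]
  _ = (m:K)*((m:K)-1) := by push_cast [Nat.cast_sub hm]; ring

lemma aux_reindex (K : Type*) [Field K] (x : K) (p a m : ℕ) (hp : 0 < p) (ha : a < p) :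
    ∑ j ∈ range (p^(m+1)), (if j % p = a then x + j else 0)
      = ∑ k ∈ range (p^m), (x + ((a:K) + p * k)) := by
  rw [← Finset.sum_filter]
  refine Finset.sum_nbij' (fun j => j / p) (fun k => p * k + a) ?_ ?_ ?_ ?_ ?_
  · intro j hj
    simp only [mem_filter, mem_range] at hj
    rw [mem_range, Nat.div_lt_iff_lt_mul hp]
    calc j < p^(m+1) := hj.1
    _ = p^m * p := by ring
  · intro k hk
    rw [mem_range] at hk
    simp only [mem_filter, mem_range]
    constructor
    · calc p * k + a < p * k + p := by omega
      _ = p * (k+1) := by ring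
      _ ≤ p * p^m := by exact Nat.mul_le_mul_left p hk
      _ = p^(m+1) := by ring
    · rw [Nat.mul_add_mod, Nat.mod_eq_of_lt ha]
  · intro j hj
    simp only [mem_filter, mem_range] at hj
    conv_rhs => rw [← Nat.div_add_mod j p, hj.2]
  · intro k hk
    show (p * k + a) / p = k; rw [Nat.mul_add_div hp, Nat.div_eq_of_lt ha, Nat.add_zero]
  · intro j hj
    simp only [mem_filter, mem_range] at hj
    congr 1
    conv_lhs => rw [← Nat.div_add_mod j p, hj.2]
    push_cast
    ring

lemma aux_calc (K : Type*) [Field K] [CharZero K] (x : K) (p a : ℕ) (hp : 0 < p)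
    (ha : a < p) (m : ℕ) :
    ((p:K)^(m+1))⁻¹ * ∑ j ∈ range (p^(m+1)), (if j % p = a then 0 else x + (j:K))
      = x - (x + a) / p + ((p:K) - 1) / 2 * (p:K)^m := by
  have hpK : (p:K) ≠ 0 := Nat.cast_ne_zero.2 hp.ne'
  have key : ∀ j : ℕ, (if j % p = a then 0 else x + (j:K))
      = (x + j) - (if j % p = a then x + j else 0) := by
    intro j; split <;> ring
  simp_rw [key]
  rw [Finset.sum_sub_distrib, aux_reindex K x p a m hp ha]
  have h1 : ∑ j ∈ range (p^(m+1)), (x + (j:K))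
      = (p:K)^(m+1) * x + ∑ j ∈ range (p^(m+1)), (j:K) := by
    rw [Finset.sum_add_distrib, Finset.sum_const, card_range, nsmul_eq_mul]
    push_cast; ring
  have h2 : ∑ k ∈ range (p^m), (x + ((a:K) + p * k))
      = (p:K)^m * (x + a) + (p:K) * ∑ k ∈ range (p^m), (k:K) := by
    have : ∀ k : ℕ, x + ((a:K) + p * k) = (x + a) + (p:K) * k := fun k => by ring
    simp_rw [this]
    rw [Finset.sum_add_distrib, Finset.sum_const, card_range, nsmul_eq_mul, ← Finset.mul_sum]
    push_cast; ring
  rw [h1, h2]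
  have hg1 := aux_gauss K (p^(m+1)) (Nat.one_le_pow _ _ hp)
  have hg2 := aux_gauss K (p^m) (Nat.one_le_pow _ _ hp)
  push_cast at hg1 hg2
  have e1 : ∑ j ∈ range (p^(m+1)), (j:K) = (p:K)^(m+1) * ((p:K)^(m+1) - 1) / 2 := by
    rw [eq_div_iff (two_ne_zero), mul_comm _ (2:K)]; exact hg1
  have e2 : ∑ k ∈ range (p^m), (k:K) = (p:K)^m * ((p:K)^m - 1) / 2 := by
    rw [eq_div_iff (two_ne_zero), mul_comm _ (2:K)]; exact hg2
  rw [e1, e2]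
  field_simp
  ring

/-- For `x ∈ ℤ_p`, the Volkenborn integral `ρ_p(x) = ∫_{ℤ_p} (x+t) χ(x+t) dt` equals
`x - ⌈x/p⌉`, where `⌈x/p⌉ ∈ ℤ_p` is the `p`-adic limit of `⌈x_n/p⌉` over natural
numbers `x_n → x` (Dwork's shift map). -/
theorem rho_p_on_Zp (p : ℕ) [Fact p.Prime] (K : Type*)
    [NontriviallyNormedField K] [CompleteSpace K] [IsAlgClosed K] [IsUltrametricDist K]
    [Algebra ℚ_[p] K] (hiso : ∀ q : ℚ_[p], ‖algebraMap ℚ_[p] K q‖ = ‖q‖)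
    (z : ℤ_[p]) (x : K) (hx : x = algebraMap ℚ_[p] K (z : ℚ_[p]))
    (c : ℤ_[p])
    (hc : ∀ u : ℕ → ℕ,
      Tendsto (fun n : ℕ => ((u n : ℤ_[p]))) atTop (nhds z) →
      Tendsto (fun n : ℕ => ((⌈(u n : ℚ) / (p : ℚ)⌉ : ℤ) : ℤ_[p])) atTop (nhds c)) :
    Tendsto (fun n : ℕ => ((p : K) ^ n)⁻¹ * ∑ j ∈ Finset.range (p ^ n),
        (if 1 ≤ ‖x + (j : K)‖ then x + (j : K) else 0))
      atTop (nhds (x - algebraMap ℚ_[p] K (c : ℚ_[p]))) := by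
  have hp := Fact.out (p := p.Prime)
  have hp0 : 0 < p := hp.pos
  haveI : CharZero K := charZero_of_injective_algebraMap (algebraMap ℚ_[p] K).injective
  have hpK : (p:K) ≠ 0 := Nat.cast_ne_zero.2 hp0.ne'
  set r := z.appr 1 with hr_def
  have hr : r < p := by simpa using z.appr_lt 1
  set a := (p - r) % p with ha_def
  have haP : a < p := Nat.mod_lt _ hp0
  -- nat divisibility transfer
  have hnatdvd : ∀ m : ℕ, ((p:ℤ_[p]) ∣ ((m:ℤ_[p]))) ↔ p ∣ m := by
    intro m
    rw [← PadicInt.norm_lt_one_iff_dvd]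
    have h := PadicInt.norm_int_lt_one_iff_dvd (p := p) (m : ℤ)
    push_cast at h
    rw [h]
    exact Int.natCast_dvd_natCast
  have hz1 : (p:ℤ_[p]) ∣ (z - (r:ℤ_[p])) := by
    have := z.appr_spec 1
    rwa [Ideal.mem_span_singleton, pow_one] at this
  have hdvd : ∀ j : ℕ, ((p:ℤ_[p]) ∣ (z + j)) ↔ j % p = a := by
    intro j
    rw [ha_def, ← aux_mod p r j hr, ← hnatdvd]
    push_cast
    constructor
    · intro h
      have e : ((r:ℤ_[p]) + j) = (z + j) - (z - r) := by ring
      rw [e]; exact dvd_sub h hz1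
    · intro h
      have e : (z + (j:ℤ_[p])) = ((r:ℤ_[p]) + j) + (z - r) := by ring
      rw [e]; exact dvd_add h hz1
  -- norm condition
  have hnorm : ∀ j : ℕ, (1 ≤ ‖x + (j:K)‖) ↔ ¬ (j % p = a) := by
    intro j
    have hxj : x + (j:K) = algebraMap ℚ_[p] K (((z + j : ℤ_[p]) : ℚ_[p])) := by
      have e : ((z + (j:ℕ) : ℤ_[p]) : ℚ_[p]) = (z:ℚ_[p]) + (j:ℚ_[p]) := by push_cast; ring
      rw [hx, e, map_add, map_natCast]
    rw [hxj, hiso, PadicInt.padic_norm_e_of_padicInt, ← hdvd j,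
      ← PadicInt.norm_lt_one_iff_dvd]
    exact not_lt.symm
  have hsummand : ∀ j : ℕ, (if 1 ≤ ‖x + (j:K)‖ then x + (j:K) else 0)
      = (if j % p = a then 0 else x + (j:K)) := by
    intro j
    rw [if_congr (hnorm j) rfl rfl, ite_not]
  -- eventual equality with explicit formula
  have heq : (fun n : ℕ => x - (x + (a:K)) / p + ((p:K) - 1) / 2 * (p:K)^(n-1))
      =ᶠ[atTop] (fun n : ℕ => ((p : K) ^ n)⁻¹ * ∑ j ∈ Finset.range (p ^ n),
        (if 1 ≤ ‖x + (j : K)‖ then x + (j : K) else 0)) := by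
    filter_upwards [eventually_ge_atTop 1] with n hn
    obtain ⟨m, rfl⟩ : ∃ m, n = m + 1 := ⟨n - 1, (Nat.succ_pred_eq_of_pos hn).symm⟩
    simp_rw [hsummand]
    rw [aux_calc K x p a hp0 haP m]
    simp
  -- determine c : p * c = z + a
  have hc' := hc z.appr (aux_appr_tendsto p z)
  have hra : p ∣ r + a := by
    rw [aux_mod p r a hr, ← ha_def, Nat.mod_eq_of_lt haP]
  have hpa : ∀ᶠ n in atTop, (p:ℤ_[p]) * ((⌈(z.appr n : ℚ) / (p : ℚ)⌉ : ℤ) : ℤ_[p])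
      = ((z.appr n : ℤ_[p]) + a) := by
    filter_upwards [eventually_ge_atTop 1] with n hn
    have hd : p ∣ z.appr n + a := by
      obtain ⟨k, hk⟩ := z.dvd_appr_sub_appr 1 n hn
      obtain ⟨l, hl⟩ := hra
      have hmono : z.appr 1 ≤ z.appr n := z.appr_mono hn
      rw [pow_one] at hk
      refine ⟨k + l, ?_⟩
      calc z.appr n + a = (z.appr n - r) + (r + a) := by omega
      _ = p * k + p * l := by rw [hk, hl]
      _ = p * (k + l) := by ring
    have := aux_ceil p (z.appr n) a hp0 haP hd
    exact_mod_cast congrArg (fun t : ℤ => (t : ℤ_[p])) this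
  have hpc : (p:ℤ_[p]) * c = z + a := by
    have t1 : Tendsto (fun n => (p:ℤ_[p]) * ((⌈(z.appr n : ℚ) / (p : ℚ)⌉ : ℤ) : ℤ_[p]))
        atTop (nhds ((p:ℤ_[p]) * c)) := tendsto_const_nhds.mul hc'
    have t2 : Tendsto (fun n => ((z.appr n : ℤ_[p]) + (a:ℤ_[p]))) atTop (nhds (z + a)) :=
      (aux_appr_tendsto p z).add tendsto_const_nhds
    exact tendsto_nhds_unique (t1.congr' hpa) t2
  -- the limit value
  have hlim : x - algebraMap ℚ_[p] K (c : ℚ_[p]) = x - (x + (a:K)) / p := by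
    have h1 : (p:ℚ_[p]) * (c:ℚ_[p]) = (z:ℚ_[p]) + a := by exact_mod_cast congrArg (fun t : ℤ_[p] => (t : ℚ_[p])) hpc
    have h2 := congrArg (algebraMap ℚ_[p] K) h1
    rw [map_mul, map_add, map_natCast, map_natCast, ← hx] at h2
    have h3 : algebraMap ℚ_[p] K (c:ℚ_[p]) = (x + (a:K))/p := by
      rw [eq_div_iff hpK]; linear_combination h2
    rw [h3]
  rw [hlim]
  refine Tendsto.congr' heq ?_
  have hnormp : ‖(p:K)‖ < 1 := by
    have e : ((p:K)) = algebraMap ℚ_[p] K (p:ℚ_[p]) := (map_natCast _ p).symm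
    rw [e, hiso, Padic.norm_p, inv_lt_one_iff₀]
    right
    exact_mod_cast hp.one_lt
  have h1 : Tendsto (fun n : ℕ => (p:K)^(n-1)) atTop (nhds 0) :=
    (tendsto_pow_atTop_nhds_zero_of_norm_lt_one hnormp).comp (tendsto_sub_atTop_nat 1)
  have h2 : Tendsto (fun n : ℕ => x - (x + (a:K)) / p + ((p:K) - 1) / 2 * (p:K)^(n-1))
      atTop (nhds (x - (x + (a:K)) / p + ((p:K) - 1) / 2 * 0)) :=
    tendsto_const_nhds.add (tendsto_const_nhds.mul h1)
  simpa using h2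
end

section
/- Let x ∈ C_p with either |x|_p > 1, or |x|_p ≤ 1 and residue of x not in F_p (i.e. x ∈ W_p). Let f : C_p\{0} → C_p be locally analytic with f(p·y) = f(y) for all y ≠ 0, and set F(w) := ∫_{Z_p} (w+t) f(w+t) χ(w+t) dt. Then for every r ≥ 1, ∑_{k=0}^{p^r - 1} F((x+k)/p^r) = F(x). -/
open Filter

private lemma sum_range_mul_aux {β : Type*} [AddCommMonoid β] (h : ℕ → β) (M N : ℕ) :
    ∑ j ∈ Finset.range (M * N), h j
      = ∑ m ∈ Finset.range N, ∑ k ∈ Finset.range M, h (M * m + k) := by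
  induction N with
  | zero => simp
  | succ N ih =>
    rw [Nat.mul_succ, Finset.sum_range_add, ih, Finset.sum_range_succ]

/-- Let `x ∈ W_p`, let `f` be locally analytic on `ℂ_p \ {0}` with `f(py) = f(y)`,
and let `F(w) = ∫_{ℤ_p} (w+t) f(w+t) χ(w+t) dt`.  Then for every `r ≥ 1`,
`∑_{k=0}^{p^r-1} F((x+k)/p^r) = F(x)`. -/
theorem F_sum_over_pr_of_Wp (p : ℕ) [Fact p.Prime] (K : Type*)
    [NontriviallyNormedField K] [CompleteSpace K] [IsAlgClosed K] [IsUltrametricDist K]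
    [Algebra ℚ_[p] K] (hiso : ∀ q : ℚ_[p], ‖algebraMap ℚ_[p] K q‖ = ‖q‖)
    (x : K) (hx : 1 < ‖x‖ ∨ (‖x‖ ≤ 1 ∧ ∀ n : ℤ, 1 ≤ ‖x - (n : K)‖))
    (f : K → K) (hfan : ∀ y : K, y ≠ 0 → AnalyticAt K f y)
    (hfp : ∀ y : K, y ≠ 0 → f ((p : K) * y) = f y)
    (F : K → K)
    (hF : ∀ w : K,
      Tendsto (fun n : ℕ => ((p : K) ^ n)⁻¹ * ∑ j ∈ Finset.range (p ^ n),
          ((w + (j : K)) * f (w + (j : K)) * (if 1 ≤ ‖w + (j : K)‖ then (1 : K) else 0)))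
        atTop (nhds (F w)))
    (r : ℕ) (hr : 1 ≤ r) :
    ∑ k ∈ Finset.range (p ^ r), F ((x + (k : K)) / (p : K) ^ r) = F x := by
  have hpK : ‖(p : K)‖ = ((p : ℝ))⁻¹ := by
    have : ((p : ℕ) : K) = algebraMap ℚ_[p] K ((p : ℕ) : ℚ_[p]) := by
      simp [map_natCast]
    rw [this, hiso, Padic.norm_p]
  have hp1 : (1 : ℝ) < p := by exact_mod_cast (Fact.out : p.Prime).one_lt
  have hpKnorm_pos : 0 < ‖(p : K)‖ := by rw [hpK]; positivity
  have hpKne : (p : K) ≠ 0 := by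
    intro h; rw [h, norm_zero] at hpKnorm_pos; exact lt_irrefl _ hpKnorm_pos
  set P : K := (p : K) ^ r with hP
  have hPne : P ≠ 0 := pow_ne_zero _ hpKne
  have hPnorm_le : ‖P‖ ≤ 1 := by
    rw [hP, norm_pow, hpK]
    apply pow_le_one₀ (by positivity)
    rw [inv_le_one_iff₀]; right; exact hp1.le
  have hPnorm_pos : 0 < ‖P‖ := norm_pos_iff.mpr hPne
  -- norm of integer casts in K
  have hnat : ∀ j : ℕ, ‖(j : K)‖ ≤ 1 := by
    intro j
    have : ((j : ℕ) : K) = algebraMap ℚ_[p] K ((j : ℕ) : ℚ_[p]) := by simp [map_natCast]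
    rw [this, hiso]
    exact_mod_cast Padic.norm_int_le_one (j : ℤ)
  -- 1 ≤ ‖x + j‖ for all naturals j
  have h1 : ∀ j : ℕ, 1 ≤ ‖x + (j : K)‖ := by
    intro j
    rcases hx with hx | ⟨_, hx2⟩
    · have hne : ‖x‖ ≠ ‖(j : K)‖ := by
        intro h; rw [h] at hx; exact absurd (lt_of_lt_of_le hx (hnat j)) (by norm_num)
      rw [IsUltrametricDist.norm_add_eq_max_of_norm_ne_norm hne]
      exact le_max_of_le_left hx.le
    · have := hx2 (-(j : ℤ))
      have hcast : x - ((-(j : ℤ) : ℤ) : K) = x + (j : K) := by push_cast; ring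
      rwa [hcast] at this
  have hne0 : ∀ j : ℕ, x + (j : K) ≠ 0 := by
    intro j h
    have := h1 j
    rw [h, norm_zero] at this; norm_num at this
  -- f is invariant under division by powers of p
  have hfdiv : ∀ y : K, y ≠ 0 → ∀ s : ℕ, f (y / (p : K) ^ s) = f y := by
    intro y hy s
    induction s with
    | zero => simp
    | succ s ih =>
      have hys : y / (p : K) ^ (s + 1) ≠ 0 := by
        apply div_ne_zero hy (pow_ne_zero _ hpKne)
      have := hfp _ hys
      have harg : (p : K) * (y / (p : K) ^ (s + 1)) = y / (p : K) ^ s := by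
        field_simp; ring
      rw [harg] at this
      rw [← ih, ← this]
  -- the summand function
  set g : K → K := fun y => y * f y * (if 1 ≤ ‖y‖ then (1 : K) else 0) with hg
  -- limit of the full sequence for x, shifted by r
  have hb : Tendsto (fun n : ℕ => ((p : K) ^ (n + r))⁻¹ *
      ∑ j ∈ Finset.range (p ^ (n + r)), g (x + (j : K))) atTop (nhds (F x)) :=
    (hF x).comp (tendsto_add_atTop_nat r)
  -- limit of the sum of sequences for the (x+k)/p^r
  have ha : Tendsto (fun n : ℕ => ∑ k ∈ Finset.range (p ^ r), (((p : K) ^ n)⁻¹ *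
      ∑ m ∈ Finset.range (p ^ n), g ((x + (k : K)) / P + (m : K)))) atTop
      (nhds (∑ k ∈ Finset.range (p ^ r), F ((x + (k : K)) / P))) :=
    tendsto_finset_sum _ (fun k _ => hF _)
  -- the two sequences agree
  have heq : ∀ n : ℕ, ∑ k ∈ Finset.range (p ^ r), (((p : K) ^ n)⁻¹ *
      ∑ m ∈ Finset.range (p ^ n), g ((x + (k : K)) / P + (m : K)))
      = ((p : K) ^ (n + r))⁻¹ * ∑ j ∈ Finset.range (p ^ (n + r)), g (x + (j : K)) := by
    intro n
    have hpow : p ^ (n + r) = p ^ r * p ^ n := by rw [pow_add, mul_comm]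
    rw [hpow, sum_range_mul_aux (fun j => g (x + (j : K))) (p ^ r) (p ^ n)]
    have key : ∀ k m : ℕ, g ((x + (k : K)) / P + (m : K))
        = P⁻¹ * g (x + ((p ^ r * m + k : ℕ) : K)) := by
      intro k m
      set j : ℕ := p ^ r * m + k with hj
      have hcast : ((j : ℕ) : K) = P * (m : K) + (k : K) := by
        push_cast [hj, hP]; ring
      have harg : (x + (k : K)) / P + (m : K) = (x + (j : K)) / P := by
        rw [hcast]; field_simp; ring
      have hnorm_div : 1 ≤ ‖(x + (j : K)) / P‖ := by
        rw [norm_div]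
        calc (1 : ℝ) ≤ ‖x + (j : K)‖ := h1 j
          _ ≤ ‖x + (j : K)‖ / ‖P‖ := by
              rw [le_div_iff₀ hPnorm_pos]
              exact mul_le_of_le_one_right (norm_nonneg _) hPnorm_le
      have hfval : f ((x + (j : K)) / P) = f (x + (j : K)) := hfdiv _ (hne0 j) r
      rw [harg, hg]
      simp only
      rw [if_pos hnorm_div, if_pos (h1 j), hfval]
      field_simp
    calc ∑ k ∈ Finset.range (p ^ r), (((p : K) ^ n)⁻¹ *
          ∑ m ∈ Finset.range (p ^ n), g ((x + (k : K)) / P + (m : K)))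
        = ∑ k ∈ Finset.range (p ^ r), ∑ m ∈ Finset.range (p ^ n),
            ((p : K) ^ (n + r))⁻¹ * g (x + ((p ^ r * m + k : ℕ) : K)) := by
          refine Finset.sum_congr rfl fun k _ => ?_
          rw [Finset.mul_sum]
          refine Finset.sum_congr rfl fun m _ => ?_
          rw [key k m, pow_add, hP, mul_inv]
          ring
      _ = ((p : K) ^ (n + r))⁻¹ * ∑ m ∈ Finset.range (p ^ n),
            ∑ k ∈ Finset.range (p ^ r), g (x + ((p ^ r * m + k : ℕ) : K)) := by
          rw [Finset.sum_comm, Finset.mul_sum]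
          refine Finset.sum_congr rfl fun m _ => ?_
          rw [Finset.mul_sum]
  exact tendsto_nhds_unique (ha.congr heq) hb
end

section
/- (Distribution formula for Diamond's log-gamma on W_p.) Let x ∈ C_p with |x|_p > 1, or |x|_p ≤ 1 and residue not in F_p. Then for every positive integer n, ∑_{k=0}^{n-1} G_p((x+k)/n) = G_p(x) - (x - 1/2)·log_p(n), where G_p(x) = ∫_{Z_p} (x+t)(log_p(x+t)-1) dt is Diamond's p-adic log-gamma function. -/
open Filter Finset

section DDAux
set_option linter.unusedSectionVars false
variable {p : ℕ} [hp : Fact p.Prime] {K : Type*} [NontriviallyNormedField K]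
  [IsUltrametricDist K] [Algebra ℚ_[p] K]

lemma DD.norm_nat (hiso : ∀ q : ℚ_[p], ‖algebraMap ℚ_[p] K q‖ = ‖q‖) (k : ℕ) :
    ‖(k : K)‖ ≤ 1 := by
  rw [← map_natCast (algebraMap ℚ_[p] K) k, hiso]
  have := Padic.norm_int_le_one (p := p) (k : ℤ)
  simpa using this

lemma DD.norm_int (hiso : ∀ q : ℚ_[p], ‖algebraMap ℚ_[p] K q‖ = ‖q‖) (k : ℤ) :
    ‖(k : K)‖ ≤ 1 := by
  rw [← map_intCast (algebraMap ℚ_[p] K) k, hiso]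
  exact Padic.norm_int_le_one k

lemma DD.norm_p (hiso : ∀ q : ℚ_[p], ‖algebraMap ℚ_[p] K q‖ = ‖q‖) :
    ‖(p : K)‖ = (p : ℝ)⁻¹ := by
  rw [← map_natCast (algebraMap ℚ_[p] K) p, hiso]
  exact Padic.norm_p

lemma DD.norm_succ_ge (hiso : ∀ q : ℚ_[p], ‖algebraMap ℚ_[p] K q‖ = ‖q‖) (i : ℕ) :
    ((i : ℝ) + 1)⁻¹ ≤ ‖((i + 1 : ℕ) : K)‖ := by
  rw [← map_natCast (algebraMap ℚ_[p] K) (i+1), hiso]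
  have h1 : ((i + 1 : ℕ) : ℚ_[p]) = (((i+1 : ℕ) : ℚ) : ℚ_[p]) := by push_cast; ring
  rw [h1, Padic.eq_padicNorm]
  have hne : ((i + 1 : ℕ) : ℚ) ≠ 0 := by positivity
  rw [padicNorm.eq_zpow_of_nonzero hne]
  have hv : padicValRat p ((i+1 : ℕ) : ℚ) = padicValNat p (i+1) := by
    exact_mod_cast (padicValRat_of_nat (p := p) (i+1)).symm
  rw [hv]
  have hle : (p : ℕ) ^ padicValNat p (i+1) ≤ i + 1 :=
    Nat.le_of_dvd (Nat.succ_pos i) pow_padicValNat_dvd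
  have hple : ((p : ℚ) ^ padicValNat p (i+1)) ≤ ((i : ℚ) + 1) := by exact_mod_cast hle
  have hppos : (0:ℚ) < (p:ℚ) ^ padicValNat p (i+1) := by
    have : (0:ℚ) < (p:ℚ) := by exact_mod_cast hp.out.pos
    positivity
  rw [show (((p:ℚ) ^ (-(padicValNat p (i+1) : ℤ)) : ℚ) : ℝ) = (p:ℝ) ^ (-(padicValNat p (i+1) : ℤ)) by push_cast; ring]
  rw [zpow_neg, zpow_natCast]
  apply inv_anti₀
  · have : (0:ℝ) < (p:ℝ) := by exact_mod_cast hp.out.pos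
    positivity
  · exact_mod_cast hle


lemma DD.term_norm (hiso : ∀ q : ℚ_[p], ‖algebraMap ℚ_[p] K q‖ = ‖q‖) (w : K) (i : ℕ) :
    ‖(-1 : K) ^ i * w ^ (i + 1) / ((i : K) + 1)‖ ≤ ((i : ℝ) + 1) * ‖w‖ ^ (i + 1) := by
  have h1 : ‖(-1 : K) ^ i * w ^ (i + 1) / ((i : K) + 1)‖
      = ‖w‖ ^ (i+1) / ‖((i : K) + 1)‖ := by
    rw [norm_div, norm_mul, norm_pow, norm_pow, norm_neg, norm_one, one_pow, one_mul]
  rw [h1]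
  have h2 := DD.norm_succ_ge hiso i
  have h3 : ((i:K) + 1) = ((i + 1 : ℕ) : K) := by push_cast; ring
  rw [h3]
  have hpos : (0:ℝ) < ((i:ℝ)+1)⁻¹ := by positivity
  have h4 : (0:ℝ) < ‖((i + 1 : ℕ) : K)‖ := lt_of_lt_of_le hpos h2
  rw [div_le_iff₀ h4]
  calc ‖w‖ ^ (i+1) = (((i:ℝ)+1) * ‖w‖^(i+1)) * ((i:ℝ)+1)⁻¹ := by field_simp
    _ ≤ (((i:ℝ)+1) * ‖w‖^(i+1)) * ‖((i + 1 : ℕ) : K)‖ := by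
        apply mul_le_mul_of_nonneg_left h2; positivity

lemma DD.pow_aux (hp2 : 2 ≤ p) (i : ℕ) : ((i:ℝ) + 1) ≤ (p:ℝ) ^ i := by
  have : i + 1 ≤ p ^ i := le_trans (Nat.lt_two_pow_self (n := i)) (Nat.pow_le_pow_left hp2 i)
  exact_mod_cast this

lemma DD.log_bound (hiso : ∀ q : ℚ_[p], ‖algebraMap ℚ_[p] K q‖ = ‖q‖)
    (logp : K → K)
    (hlog_series : ∀ x : K, ‖x - 1‖ < 1 →
      HasSum (fun n : ℕ => (-1) ^ n * (x - 1) ^ (n + 1) / (n + 1 : K)) (logp x))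
    (z : K) (hz : ‖z‖ ≤ (p : ℝ)⁻¹) : ‖logp (1 + z)‖ ≤ ‖z‖ := by
  have hp1 : (1:ℝ) < p := by exact_mod_cast hp.out.one_lt
  have hz1 : ‖z‖ < 1 := lt_of_le_of_lt hz (by rw [inv_lt_one_iff₀]; right; exact hp1)
  have hs := hlog_series (1 + z) (by simpa using hz1)
  simp only [add_sub_cancel_left] at hs
  rw [← hs.tsum_eq]
  apply IsUltrametricDist.norm_tsum_le_of_forall_le_of_nonneg (norm_nonneg z)
  intro i
  refine le_trans (DD.term_norm hiso z i) ?_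
  calc ((i : ℝ) + 1) * ‖z‖ ^ (i + 1) = (((i:ℝ)+1) * ‖z‖^i) * ‖z‖ := by ring
    _ ≤ ((p:ℝ)^i * ((p:ℝ)⁻¹)^i) * ‖z‖ := by
        apply mul_le_mul_of_nonneg_right _ (norm_nonneg z)
        apply mul_le_mul (DD.pow_aux hp.out.two_le i)
          (pow_le_pow_left₀ (norm_nonneg z) hz i) (by positivity) (by positivity)
    _ = ‖z‖ := by
        rw [← mul_pow, mul_inv_cancel₀ (by positivity : (p:ℝ) ≠ 0), one_pow, one_mul]

lemma DD.log_bound2 (hiso : ∀ q : ℚ_[p], ‖algebraMap ℚ_[p] K q‖ = ‖q‖)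
    (logp : K → K)
    (hlog_series : ∀ x : K, ‖x - 1‖ < 1 →
      HasSum (fun n : ℕ => (-1) ^ n * (x - 1) ^ (n + 1) / (n + 1 : K)) (logp x))
    (z : K) (hz : ‖z‖ ≤ (p : ℝ)⁻¹) : ‖logp (1 + z) - z‖ ≤ (p:ℝ) * ‖z‖ ^ 2 := by
  have hp1 : (1:ℝ) < p := by exact_mod_cast hp.out.one_lt
  have hppos : (0:ℝ) < p := lt_trans one_pos hp1
  have hz1 : ‖z‖ < 1 := lt_of_le_of_lt hz (by rw [inv_lt_one_iff₀]; right; exact hp1)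
  have hs := hlog_series (1 + z) (by simpa using hz1)
  simp only [add_sub_cancel_left] at hs
  set f : ℕ → K := fun i => (-1 : K) ^ i * z ^ (i + 1) / ((i : K) + 1) with hf
  have hs' : HasSum (fun i => f (i + 1)) (logp (1 + z) - ∑ i ∈ range 1, f i) :=
    (hasSum_nat_add_iff' 1).mpr hs
  have hf0 : ∑ i ∈ range 1, f i = z := by simp [hf]
  rw [hf0] at hs'
  rw [← hs'.tsum_eq]
  apply IsUltrametricDist.norm_tsum_le_of_forall_le_of_nonneg (by positivity)
  intro i
  refine le_trans (DD.term_norm hiso z (i+1)) ?_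
  have h2 : ((i:ℝ) + 1 + 1) ≤ (p:ℝ) ^ (i+1) := by
    have := DD.pow_aux (p := p) hp.out.two_le (i+1)
    push_cast at this ⊢
    linarith
  calc ((i+1 : ℕ) + 1 : ℝ) * ‖z‖ ^ ((i+1) + 1)
      = (((i:ℝ)+1+1) * ‖z‖^i) * ‖z‖^2 := by push_cast; ring
    _ ≤ ((p:ℝ)^(i+1) * ((p:ℝ)⁻¹)^i) * ‖z‖^2 := by
        apply mul_le_mul_of_nonneg_right _ (by positivity)
        apply mul_le_mul h2 (pow_le_pow_left₀ (norm_nonneg z) hz i) (by positivity) (by positivity)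
    _ = (p:ℝ) * ‖z‖^2 := by
        rw [pow_succ]
        rw [show (p:ℝ)^i * (p:ℝ) * ((p:ℝ)⁻¹)^i = ((p:ℝ) * (p:ℝ)⁻¹)^i * (p:ℝ) by ring]
        rw [mul_inv_cancel₀ (by positivity : (p:ℝ) ≠ 0), one_pow, one_mul]

lemma DD.sum_range_mul' {M : Type*} [AddCommMonoid M] (g : ℕ → M) (a b : ℕ) :
    ∑ i ∈ Finset.range (a * b), g i
      = ∑ j ∈ Finset.range b, ∑ k ∈ Finset.range a, g (a * j + k) := by
  induction b with
  | zero => simp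
  | succ b ih => rw [Nat.mul_succ, Finset.sum_range_add, ih, Finset.sum_range_succ]

lemma DD.log_one (logp : K → K)
    (hlog_mul : ∀ x y : K, x ≠ 0 → y ≠ 0 → logp (x * y) = logp x + logp y) :
    logp 1 = 0 := by
  have h := hlog_mul 1 1 one_ne_zero one_ne_zero
  rw [mul_one] at h
  exact (left_eq_add.mp h)

lemma DD.log_inv (logp : K → K)
    (hlog_mul : ∀ x y : K, x ≠ 0 → y ≠ 0 → logp (x * y) = logp x + logp y)
    (y : K) (hy : y ≠ 0) : logp y⁻¹ = - logp y := by
  have h := hlog_mul y y⁻¹ hy (inv_ne_zero hy)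
  rw [mul_inv_cancel₀ hy, DD.log_one logp hlog_mul] at h
  linear_combination -h

lemma DD.second_order (hiso : ∀ q : ℚ_[p], ‖algebraMap ℚ_[p] K q‖ = ‖q‖)
    (logp : K → K)
    (hlog_mul : ∀ x y : K, x ≠ 0 → y ≠ 0 → logp (x * y) = logp x + logp y)
    (hlog_series : ∀ x : K, ‖x - 1‖ < 1 →
      HasSum (fun n : ℕ => (-1) ^ n * (x - 1) ^ (n + 1) / (n + 1 : K)) (logp x))
    (u ε : K) (hu : 1 ≤ ‖u‖) (he : ‖ε‖ ≤ (p:ℝ)⁻¹) :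
    ‖(u + ε) * (logp (u + ε) - 1) - u * (logp u - 1) - ε * logp u‖ ≤ (p:ℝ) * ‖ε‖^2 := by
  have hp1 : (1:ℝ) < p := by exact_mod_cast hp.out.one_lt
  have hu0 : u ≠ 0 := by
    intro h; rw [h, norm_zero] at hu; linarith
  set z : K := ε * u⁻¹ with hzdef
  have hnzeq : ‖z‖ = ‖ε‖ * ‖u‖⁻¹ := by rw [hzdef, norm_mul, norm_inv]
  have hnz : ‖z‖ ≤ ‖ε‖ := by
    rw [hnzeq]
    calc ‖ε‖ * ‖u‖⁻¹ ≤ ‖ε‖ * 1 := by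
          apply mul_le_mul_of_nonneg_left _ (norm_nonneg ε)
          rw [inv_le_one_iff₀]; right; exact hu
      _ = ‖ε‖ := mul_one _
  have hz : ‖z‖ ≤ (p:ℝ)⁻¹ := le_trans hnz he
  have hz1 : ‖z‖ < 1 := lt_of_le_of_lt hz (by rw [inv_lt_one_iff₀]; right; exact hp1)
  have h1z : (1 : K) + z ≠ 0 := by
    intro h
    have : z = -1 := by linear_combination h
    rw [this, norm_neg, norm_one] at hz1; linarith
  have hfact : u + ε = u * (1 + z) := by
    rw [hzdef]; field_simp
  have hlog : logp (u + ε) = logp u + logp (1 + z) := by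
    rw [hfact, hlog_mul u (1 + z) hu0 h1z]
  set L := logp (1 + z) with hL
  have key : (u + ε) * (logp (u + ε) - 1) - u * (logp u - 1) - ε * logp u
      = u * (L - z) + ε * L := by
    rw [hlog, hzdef]; field_simp; ring
  rw [key]
  have hL1 := DD.log_bound hiso logp hlog_series z hz
  have hL2 := DD.log_bound2 hiso logp hlog_series z hz
  refine le_trans (IsUltrametricDist.norm_add_le_max _ _) (max_le ?_ ?_)
  · calc ‖u * (L - z)‖ = ‖u‖ * ‖L - z‖ := norm_mul _ _
      _ ≤ ‖u‖ * ((p:ℝ) * ‖z‖^2) := mul_le_mul_of_nonneg_left hL2 (norm_nonneg u)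
      _ = (p:ℝ) * ((‖u‖ * ‖z‖) * ‖z‖) := by ring
      _ ≤ (p:ℝ) * (‖ε‖ * ‖ε‖) := by
          apply mul_le_mul_of_nonneg_left _ (by linarith)
          apply mul_le_mul _ hnz (norm_nonneg z) (norm_nonneg ε)
          rw [hnzeq]
          have hune : ‖u‖ ≠ 0 := by positivity
          calc ‖u‖ * (‖ε‖ * ‖u‖⁻¹) = ‖ε‖ := by field_simp
            _ ≤ ‖ε‖ := le_refl _
      _ = (p:ℝ) * ‖ε‖^2 := by ring
  · calc ‖ε * L‖ = ‖ε‖ * ‖L‖ := norm_mul _ _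
      _ ≤ ‖ε‖ * ‖z‖ := mul_le_mul_of_nonneg_left hL1 (norm_nonneg ε)
      _ ≤ ‖ε‖ * ‖ε‖ := mul_le_mul_of_nonneg_left hnz (norm_nonneg ε)
      _ = 1 * ‖ε‖^2 := by ring
      _ ≤ (p:ℝ) * ‖ε‖^2 := by
          apply mul_le_mul_of_nonneg_right (by linarith) (by positivity)

end DDAux
/-- Distribution formula for Diamond's `p`-adic log-gamma function
`G_p(x) = ∫_{ℤ_p} (x+t)(log_p(x+t)-1) dt` on `W_p`: for `x ∈ W_p` and `n ≥ 1`,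
`∑_{k=0}^{n-1} G_p((x+k)/n) = G_p(x) - (x - 1/2) log_p(n)`. -/
theorem diamond_distribution_on_Wp (p : ℕ) [Fact p.Prime] (K : Type*)
    [NontriviallyNormedField K] [CompleteSpace K] [IsAlgClosed K] [IsUltrametricDist K]
    [Algebra ℚ_[p] K] (hiso : ∀ q : ℚ_[p], ‖algebraMap ℚ_[p] K q‖ = ‖q‖)
    (logp : K → K)
    (hlog_an : ∀ x : K, x ≠ 0 → AnalyticAt K logp x)
    (hlog_mul : ∀ x y : K, x ≠ 0 → y ≠ 0 → logp (x * y) = logp x + logp y)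
    (hlog_p : logp (p : K) = 0)
    (hlog_series : ∀ x : K, ‖x - 1‖ < 1 →
      HasSum (fun n : ℕ => (-1) ^ n * (x - 1) ^ (n + 1) / (n + 1 : K)) (logp x))
    (G : K → K)
    (hG : ∀ w : K, (1 < ‖w‖ ∨ (‖w‖ ≤ 1 ∧ ∀ n : ℤ, 1 ≤ ‖w - (n : K)‖)) →
      Tendsto (fun n : ℕ => ((p : K) ^ n)⁻¹ * ∑ j ∈ Finset.range (p ^ n),
          ((w + (j : K)) * (logp (w + (j : K)) - 1)))
        atTop (nhds (G w)))
    (x : K) (hx : 1 < ‖x‖ ∨ (‖x‖ ≤ 1 ∧ ∀ n : ℤ, 1 ≤ ‖x - (n : K)‖))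
    (n : ℕ) (hn : 0 < n) :
    ∑ k ∈ Finset.range n, G ((x + (k : K)) / (n : K)) = G x - (x - 1 / 2) * logp (n : K) := by
  have hp' : Fact p.Prime := inferInstance
  have hp1 : (1:ℝ) < p := by exact_mod_cast hp'.out.one_lt
  have hppos : (0:ℝ) < p := lt_trans one_pos hp1
  have hpinv_lt : (p:ℝ)⁻¹ < 1 := by rw [inv_lt_one_iff₀]; right; exact hp1
  have hpinv_nn : (0:ℝ) ≤ (p:ℝ)⁻¹ := by positivity
  have hpK : ‖(p:K)‖ = (p:ℝ)⁻¹ := DD.norm_p hiso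
  have hpK0 : (p:K) ≠ 0 := by
    intro h; rw [h, norm_zero] at hpK; exact absurd hpK.symm (by positivity)
  have hpmK : ∀ m : ℕ, ‖(p:K)^m‖ = ((p:ℝ)⁻¹)^m := fun m => by rw [norm_pow, hpK]
  have hpm0 : ∀ m : ℕ, (p:K)^m ≠ 0 := fun m => pow_ne_zero _ hpK0
  have hnat0 : ∀ m : ℕ, 0 < m → (m:K) ≠ 0 := by
    intro m hm h
    have h2 : (m:K) = algebraMap ℚ_[p] K (m:ℚ_[p]) := by rw [map_natCast]
    have h3 : (m:ℚ_[p]) = 0 := by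
      apply (algebraMap ℚ_[p] K).injective
      rw [← h2, h, map_zero]
    exact (Nat.cast_ne_zero.mpr hm.ne') h3
  have hnK0 : (n:K) ≠ 0 := hnat0 n hn
  have h2K : (2:K) ≠ 0 := by
    have := hnat0 2 (by norm_num)
    simpa using this
  -- the function under the Volkenborn sums
  set f : K → K := fun w => w * (logp w - 1) with hfdef
  have hG' : ∀ w : K, (1 < ‖w‖ ∨ (‖w‖ ≤ 1 ∧ ∀ n : ℤ, 1 ≤ ‖w - (n : K)‖)) →
      Tendsto (fun m : ℕ => ((p : K) ^ m)⁻¹ * ∑ j ∈ Finset.range (p ^ m), f (w + (j : K)))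
        atTop (nhds (G w)) := hG
  -- norms of x + j
  have hQ : ∀ i : ℕ, 1 ≤ ‖x + (i:K)‖ := by
    intro i
    rcases hx with h | ⟨h1, h2⟩
    · have hne : ‖x‖ ≠ ‖(i:K)‖ := by
        intro hc
        exact absurd (hc ▸ h) (not_lt.mpr (DD.norm_nat hiso i))
      have := IsUltrametricDist.norm_add_eq_max_of_norm_ne_norm hne
      rw [this]
      exact le_max_of_le_left (le_of_lt h)
    · have := h2 (-(i:ℤ))
      have hc : x - ((-(i:ℤ) : ℤ) : K) = x + (i:K) := by push_cast; ring
      rwa [hc] at this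
  have hQ0 : ∀ i : ℕ, x + (i:K) ≠ 0 := by
    intro i h
    have := hQ i
    rw [h, norm_zero] at this
    linarith
  -- membership of the translated-divided points in W_p
  have hWmem : ∀ k : ℕ, (1 < ‖(x + (k:K)) / (n:K)‖ ∨
      (‖(x + (k:K)) / (n:K)‖ ≤ 1 ∧ ∀ m : ℤ, 1 ≤ ‖(x + (k:K)) / (n:K) - (m : K)‖)) := by
    intro k
    have hnle : ‖(n:K)‖ ≤ 1 := DD.norm_nat hiso n
    have hnpos : 0 < ‖(n:K)‖ := norm_pos_iff.mpr hnK0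
    rcases hx with h | ⟨h1, h2⟩
    · left
      have hne : ‖x‖ ≠ ‖(k:K)‖ := by
        intro hc
        exact absurd (hc ▸ h) (not_lt.mpr (DD.norm_nat hiso k))
      have hxk : ‖x + (k:K)‖ = ‖x‖ := by
        rw [IsUltrametricDist.norm_add_eq_max_of_norm_ne_norm hne]
        exact max_eq_left (le_trans (DD.norm_nat hiso k) (le_of_lt h))
      rw [norm_div, hxk]
      calc (1:ℝ) < ‖x‖ := h
        _ = ‖x‖ / 1 := (div_one _).symm
        _ ≤ ‖x‖ / ‖(n:K)‖ := by
            apply div_le_div_of_nonneg_left (by linarith) hnpos hnle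
    · have hxk : ‖x + (k:K)‖ = 1 := by
        apply le_antisymm
        · refine le_trans (IsUltrametricDist.norm_add_le_max x _) ?_
          exact max_le h1 (DD.norm_nat hiso k)
        · have := h2 (-(k:ℤ))
          have hc : x - ((-(k:ℤ) : ℤ) : K) = x + (k:K) := by push_cast; ring
          rwa [hc] at this
      by_cases hn1 : ‖(n:K)‖ = 1
      · right
        constructor
        · rw [norm_div, hxk, hn1]; norm_num
        · intro m
          have key := h2 (m * n - k)
          have hc : (x + (k:K)) / (n:K) - (m:K) = (x - ((m * n - k : ℤ) : K)) / (n:K) := by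
            push_cast
            field_simp
            ring
          rw [hc, norm_div, hn1, div_one]
          exact key
      · left
        rw [norm_div, hxk]
        rw [lt_div_iff₀ hnpos, one_mul]
        exact lt_of_le_of_ne hnle hn1
  -- the auxiliary sums
  set Λ : ℕ → K := fun m => ∑ j ∈ Finset.range (p^m), logp (x + (j:K)) with hΛdef
  set E : ℕ → K := fun m => ∑ k ∈ Finset.range n, ∑ j ∈ Finset.range (p^m),
      (f ((x + (j:K)) + (p:K)^m * (k:K)) - f (x + (j:K))
        - (p:K)^m * (k:K) * logp (x + (j:K))) with hEdef
  set B : ℕ → K := fun m => ((n:K) * (p:K)^m)⁻¹ * ∑ i ∈ Finset.range (n * p^m), f (x + (i:K))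
    with hBdef
  set c : K := (∑ k ∈ Finset.range n, (k:K)) * (n:K)⁻¹ with hcdef
  -- decomposition of B
  have hBid : ∀ m : ℕ, B m = ((p:K)^m)⁻¹ * (∑ j ∈ Finset.range (p^m), f (x + (j:K)))
      + c * Λ m + ((n:K) * (p:K)^m)⁻¹ * E m := by
    intro m
    have hpt : ∀ a b : ℕ, f (x + ((p^m * a + b : ℕ):K))
        = f (x + (b:K)) + (p:K)^m * (a:K) * logp (x + (b:K))
          + (f ((x + (b:K)) + (p:K)^m * (a:K)) - f (x + (b:K))
            - (p:K)^m * (a:K) * logp (x + (b:K))) := by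
      intro a b
      have hc : x + ((p^m * a + b : ℕ):K) = (x + (b:K)) + (p:K)^m * (a:K) := by
        push_cast; ring
      rw [hc]; ring
    have h1 : ∑ i ∈ Finset.range (n * p^m), f (x + (i:K))
        = (n:K) * (∑ j ∈ Finset.range (p^m), f (x + (j:K)))
          + (p:K)^m * (∑ k ∈ Finset.range n, (k:K))
              * (∑ j ∈ Finset.range (p^m), logp (x + (j:K)))
          + ∑ k ∈ Finset.range n, ∑ j ∈ Finset.range (p^m),
              (f ((x + (j:K)) + (p:K)^m * (k:K)) - f (x + (j:K))
                - (p:K)^m * (k:K) * logp (x + (j:K))) := by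
      rw [mul_comm n (p^m), DD.sum_range_mul' (fun i => f (x + (i:K))) (p^m) n]
      rw [Finset.sum_congr rfl (fun a _ => Finset.sum_congr rfl (fun b _ => hpt a b))]
      simp only [Finset.sum_add_distrib]
      congr 1
      · congr 1
        · rw [Finset.sum_const, Finset.card_range, nsmul_eq_mul]
        · set L : K := ∑ j ∈ Finset.range (p^m), logp (x + (j:K)) with hLdef
          have hterm : ∀ a : ℕ, ∑ j ∈ Finset.range (p^m),
              (p:K)^m * (a:K) * logp (x + (j:K)) = (a:K) * ((p:K)^m * L) := by
            intro a
            rw [← Finset.mul_sum]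
            ring
          rw [Finset.sum_congr rfl (fun a _ => hterm a), ← Finset.sum_mul]
          ring
    simp only [hBdef, hEdef, hΛdef, hcdef]
    rw [h1]
    field_simp
  -- bound on E
  have hE : ∀ m : ℕ, 1 ≤ m → ‖E m‖ ≤ (p:ℝ) * (((p:ℝ)⁻¹)^m)^2 := by
    intro m hm
    have hbnd : (0:ℝ) ≤ (p:ℝ) * (((p:ℝ)⁻¹)^m)^2 := by positivity
    simp only [hEdef]
    apply IsUltrametricDist.norm_sum_le_of_forall_le_of_nonneg hbnd
    intro k _
    apply IsUltrametricDist.norm_sum_le_of_forall_le_of_nonneg hbnd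
    intro j _
    have heps : ‖(p:K)^m * (k:K)‖ ≤ ((p:ℝ)⁻¹)^m := by
      rw [norm_mul, hpmK]
      calc ((p:ℝ)⁻¹)^m * ‖(k:K)‖ ≤ ((p:ℝ)⁻¹)^m * 1 :=
            mul_le_mul_of_nonneg_left (DD.norm_nat hiso k) (by positivity)
        _ = ((p:ℝ)⁻¹)^m := mul_one _
    have heps' : ‖(p:K)^m * (k:K)‖ ≤ (p:ℝ)⁻¹ := by
      refine le_trans heps ?_
      calc ((p:ℝ)⁻¹)^m ≤ ((p:ℝ)⁻¹)^1 :=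
            pow_le_pow_of_le_one hpinv_nn (le_of_lt hpinv_lt) hm
        _ = (p:ℝ)⁻¹ := pow_one _
    have key := DD.second_order hiso logp hlog_mul hlog_series (x + (j:K))
      ((p:K)^m * (k:K)) (hQ j) heps'
    refine le_trans key ?_
    apply mul_le_mul_of_nonneg_left _ (le_of_lt hppos)
    calc ‖(p:K)^m * (k:K)‖^2 ≤ (((p:ℝ)⁻¹)^m)^2 := by
          apply pow_le_pow_left₀ (norm_nonneg _) heps
      _ = (((p:ℝ)⁻¹)^m)^2 := rfl
  -- the error term tends to zero
  have hr : Tendsto (fun m => ((n:K) * (p:K)^m)⁻¹ * E m) atTop (nhds 0) := by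
    have hb : ∀ m : ℕ, 1 ≤ m → ‖((n:K) * (p:K)^m)⁻¹ * E m‖
        ≤ (‖(n:K)‖⁻¹ * (p:ℝ)) * ((p:ℝ)⁻¹)^m := by
      intro m hm
      have hnn : (0:ℝ) < ‖(n:K)‖ := norm_pos_iff.mpr hnK0
      have hppm : (0:ℝ) < ((p:ℝ)⁻¹)^m := by positivity
      rw [norm_mul, norm_inv, norm_mul, hpmK]
      calc (‖(n:K)‖ * ((p:ℝ)⁻¹)^m)⁻¹ * ‖E m‖
          ≤ (‖(n:K)‖ * ((p:ℝ)⁻¹)^m)⁻¹ * ((p:ℝ) * (((p:ℝ)⁻¹)^m)^2) := by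
            apply mul_le_mul_of_nonneg_left (hE m hm) (by positivity)
        _ = (‖(n:K)‖⁻¹ * (p:ℝ)) * ((p:ℝ)⁻¹)^m := by
            field_simp
    have hg : Tendsto (fun m : ℕ => (‖(n:K)‖⁻¹ * (p:ℝ)) * ((p:ℝ)⁻¹)^m) atTop (nhds 0) := by
      have h0 : Tendsto (fun m : ℕ => ((p:ℝ)⁻¹)^m) atTop (nhds 0) := by
        apply tendsto_pow_atTop_nhds_zero_of_norm_lt_one
        rw [Real.norm_eq_abs, abs_of_nonneg hpinv_nn]
        exact hpinv_lt
      have := h0.const_mul (‖(n:K)‖⁻¹ * (p:ℝ))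
      simpa using this
    apply squeeze_zero_norm' _ hg
    filter_upwards [eventually_ge_atTop 1] with m hm
    exact hb m hm
  -- Λ tends to zero
  have hΛrec : ∀ m : ℕ, 1 ≤ m → ‖Λ (m+1)‖ ≤ max ((p:ℝ)⁻¹ * ‖Λ m‖) (((p:ℝ)⁻¹)^m) := by
    intro m hm
    have hsplit : ∀ a b : ℕ, logp (x + ((p^m * a + b : ℕ):K))
        = logp (x + (b:K)) + logp (1 + ((p:K)^m * (a:K)) * (x + (b:K))⁻¹) := by
      intro a b
      have hub : x + (b:K) ≠ 0 := hQ0 b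
      have hz : ‖((p:K)^m * (a:K)) * (x + (b:K))⁻¹‖ < 1 := by
        rw [norm_mul, norm_mul, hpmK, norm_inv]
        have h1 : ((p:ℝ)⁻¹)^m * ‖(a:K)‖ ≤ ((p:ℝ)⁻¹)^m := by
          calc ((p:ℝ)⁻¹)^m * ‖(a:K)‖ ≤ ((p:ℝ)⁻¹)^m * 1 :=
              mul_le_mul_of_nonneg_left (DD.norm_nat hiso a) (by positivity)
            _ = _ := mul_one _
        have h2 : ‖x + (b:K)‖⁻¹ ≤ 1 := by
          rw [inv_le_one_iff₀]; right; exact hQ b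
        have h3 : ((p:ℝ)⁻¹)^m < 1 := by
          apply pow_lt_one₀ hpinv_nn hpinv_lt (by omega)
        have hnn : (0:ℝ) ≤ ‖x + (b:K)‖⁻¹ := by positivity
        calc ((p:ℝ)⁻¹)^m * ‖(a:K)‖ * ‖x + (b:K)‖⁻¹
            ≤ ((p:ℝ)⁻¹)^m * 1 := by
              apply mul_le_mul h1 h2 hnn (by positivity)
          _ < 1 := by rw [mul_one]; exact h3
      have h1z : (1:K) + ((p:K)^m * (a:K)) * (x + (b:K))⁻¹ ≠ 0 := by
        intro h
        have : ((p:K)^m * (a:K)) * (x + (b:K))⁻¹ = -1 := by linear_combination h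
        rw [this, norm_neg, norm_one] at hz; linarith
      have hc : x + ((p^m * a + b : ℕ):K)
          = (x + (b:K)) * (1 + ((p:K)^m * (a:K)) * (x + (b:K))⁻¹) := by
        push_cast
        field_simp
        ring
      rw [hc, hlog_mul _ _ hub h1z]
    have h1 : Λ (m+1) = (p:K) * Λ m + ∑ a ∈ Finset.range p, ∑ b ∈ Finset.range (p^m),
        logp (1 + ((p:K)^m * (a:K)) * (x + (b:K))⁻¹) := by
      simp only [hΛdef]
      rw [pow_succ, DD.sum_range_mul' (fun i => logp (x + (i:K))) (p^m) p]
      rw [Finset.sum_congr rfl (fun a _ => Finset.sum_congr rfl (fun b _ => hsplit a b))]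
      simp only [Finset.sum_add_distrib]
      congr 1
      rw [Finset.sum_const, Finset.card_range, nsmul_eq_mul]
    rw [h1]
    refine le_trans (IsUltrametricDist.norm_add_le_max _ _) (max_le_max ?_ ?_)
    · rw [norm_mul, hpK]
    · have hbnd : (0:ℝ) ≤ ((p:ℝ)⁻¹)^m := by positivity
      apply IsUltrametricDist.norm_sum_le_of_forall_le_of_nonneg hbnd
      intro a _
      apply IsUltrametricDist.norm_sum_le_of_forall_le_of_nonneg hbnd
      intro b _
      have hzle : ‖((p:K)^m * (a:K)) * (x + (b:K))⁻¹‖ ≤ ((p:ℝ)⁻¹)^m := by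
        rw [norm_mul, norm_mul, hpmK, norm_inv]
        have h2 : ‖x + (b:K)‖⁻¹ ≤ 1 := by
          rw [inv_le_one_iff₀]; right; exact hQ b
        calc ((p:ℝ)⁻¹)^m * ‖(a:K)‖ * ‖x + (b:K)‖⁻¹
            ≤ ((p:ℝ)⁻¹)^m * 1 * 1 := by
              apply mul_le_mul _ h2 (by positivity) (by positivity)
              apply mul_le_mul_of_nonneg_left (DD.norm_nat hiso a) (by positivity)
          _ = ((p:ℝ)⁻¹)^m := by ring
      have hzp : ‖((p:K)^m * (a:K)) * (x + (b:K))⁻¹‖ ≤ (p:ℝ)⁻¹ := by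
        refine le_trans hzle ?_
        calc ((p:ℝ)⁻¹)^m ≤ ((p:ℝ)⁻¹)^1 :=
              pow_le_pow_of_le_one hpinv_nn (le_of_lt hpinv_lt) hm
          _ = (p:ℝ)⁻¹ := pow_one _
      exact le_trans (DD.log_bound hiso logp hlog_series _ hzp) hzle
  have hΛ : Tendsto Λ atTop (nhds 0) := by
    set M : ℝ := max ‖Λ 1‖ 1 with hMdef
    have hM1 : (1:ℝ) ≤ M := le_max_right _ _
    have hbound : ∀ m : ℕ, ‖Λ (m+1)‖ ≤ M * ((p:ℝ)⁻¹)^m := by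
      intro m
      induction m with
      | zero =>
        simp only [pow_zero, mul_one]
        exact le_max_left _ _
      | succ m ih =>
        refine le_trans (hΛrec (m+1) (by omega)) (max_le ?_ ?_)
        · calc (p:ℝ)⁻¹ * ‖Λ (m+1)‖ ≤ (p:ℝ)⁻¹ * (M * ((p:ℝ)⁻¹)^m) :=
              mul_le_mul_of_nonneg_left ih hpinv_nn
            _ = M * ((p:ℝ)⁻¹)^(m+1) := by ring
        · calc ((p:ℝ)⁻¹)^(m+1) = 1 * ((p:ℝ)⁻¹)^(m+1) := (one_mul _).symm
            _ ≤ M * ((p:ℝ)⁻¹)^(m+1) := by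
                apply mul_le_mul_of_nonneg_right hM1 (by positivity)
    have hg : Tendsto (fun m : ℕ => M * ((p:ℝ)⁻¹)^m) atTop (nhds 0) := by
      have h0 : Tendsto (fun m : ℕ => ((p:ℝ)⁻¹)^m) atTop (nhds 0) := by
        apply tendsto_pow_atTop_nhds_zero_of_norm_lt_one
        rw [Real.norm_eq_abs, abs_of_nonneg hpinv_nn]
        exact hpinv_lt
      have := h0.const_mul M
      simpa using this
    have hshift : Tendsto (fun m : ℕ => Λ (m+1)) atTop (nhds 0) :=
      squeeze_zero_norm hbound hg
    exact (tendsto_add_atTop_iff_nat 1).mp hshift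
  -- B tends to G x
  have hB : Tendsto B atTop (nhds (G x)) := by
    have h1 := (hG' x hx).add ((hΛ.const_mul c).add hr)
    have h2 : Tendsto B atTop (nhds (G x + (c * 0 + 0))) := by
      apply h1.congr
      intro m
      rw [hBid m]
      ring
    simpa using h2
  -- the distribution identity at level m
  have hAid : ∀ m : ℕ, (∑ k ∈ Finset.range n,
        ((p:K)^m)⁻¹ * ∑ j ∈ Finset.range (p^m), f ((x + (k:K)) / (n:K) + (j:K)))
      = B m - logp (n:K) * (x - 1/2) - logp (n:K) * ((n:K) * (p:K)^m) / 2 := by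
    intro m
    have hlog_div : ∀ u : K, u ≠ 0 → logp (u * (n:K)⁻¹) = logp u - logp (n:K) := by
      intro u hu
      rw [hlog_mul u (n:K)⁻¹ hu (inv_ne_zero hnK0),
        DD.log_inv logp hlog_mul (n:K) hnK0]
      ring
    have hpt : ∀ k j : ℕ, f ((x + (k:K))/(n:K) + (j:K))
        = (n:K)⁻¹ * f (x + ((n*j + k:ℕ):K))
          - logp (n:K) * ((x + ((n*j + k:ℕ):K)) * (n:K)⁻¹) := by
      intro k j
      have hu : x + ((n*j + k:ℕ):K) ≠ 0 := hQ0 _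
      have hc : (x + (k:K))/(n:K) + (j:K) = (x + ((n*j + k:ℕ):K)) * (n:K)⁻¹ := by
        push_cast
        field_simp
        ring
      rw [hc]
      simp only [hfdef]
      rw [hlog_div _ hu]
      ring
    have hA1 : ∑ k ∈ Finset.range n, ∑ j ∈ Finset.range (p^m),
          (n:K)⁻¹ * f (x + ((n*j + k:ℕ):K))
        = (n:K)⁻¹ * ∑ i ∈ Finset.range (n * p^m), f (x + (i:K)) := by
      rw [Finset.sum_comm, DD.sum_range_mul' (fun i => f (x + (i:K))) n (p^m),
        Finset.mul_sum]
      apply Finset.sum_congr rfl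
      intro j _
      rw [Finset.mul_sum]
    have hA2 : ∑ k ∈ Finset.range n, ∑ j ∈ Finset.range (p^m),
          logp (n:K) * ((x + ((n*j + k:ℕ):K)) * (n:K)⁻¹)
        = logp (n:K) * (n:K)⁻¹ * ∑ i ∈ Finset.range (n * p^m), (x + (i:K)) := by
      rw [Finset.sum_comm, DD.sum_range_mul' (fun i => x + (i:K)) n (p^m),
        Finset.mul_sum]
      apply Finset.sum_congr rfl
      intro j _
      rw [Finset.mul_sum]
      apply Finset.sum_congr rfl
      intro k _
      ring
    have hstep1 : (∑ k ∈ Finset.range n,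
          ((p:K)^m)⁻¹ * ∑ j ∈ Finset.range (p^m), f ((x + (k:K)) / (n:K) + (j:K)))
        = ((p:K)^m)⁻¹ * ((n:K)⁻¹ * (∑ i ∈ Finset.range (n * p^m), f (x + (i:K)))
            - logp (n:K) * (n:K)⁻¹ * (∑ i ∈ Finset.range (n * p^m), (x + (i:K)))) := by
      rw [← Finset.mul_sum]
      congr 1
      rw [Finset.sum_congr rfl (fun k _ => Finset.sum_congr rfl (fun j _ => hpt k j))]
      simp only [Finset.sum_sub_distrib]
      rw [hA1, hA2]
    have hN1 : 1 ≤ n * p^m := Nat.one_le_iff_ne_zero.mpr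
      (Nat.mul_ne_zero hn.ne' (pow_ne_zero m hp'.out.pos.ne'))
    have hNK : ((n * p^m : ℕ):K) = (n:K) * (p:K)^m := by push_cast; ring
    have hsumx : ∑ i ∈ Finset.range (n * p^m), (x + (i:K))
        = ((n * p^m : ℕ):K) * x + ∑ i ∈ Finset.range (n * p^m), (i:K) := by
      rw [Finset.sum_add_distrib, Finset.sum_const, Finset.card_range, nsmul_eq_mul]
    have hgauss : (∑ i ∈ Finset.range (n * p^m), (i:K)) * 2
        = ((n * p^m : ℕ):K) * (((n * p^m : ℕ):K) - 1) := by
      have h := Finset.sum_range_id_mul_two (n * p^m)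
      have hcast : ((∑ i ∈ Finset.range (n * p^m), i : ℕ) : K)
          = ∑ i ∈ Finset.range (n * p^m), (i:K) := by push_cast; rfl
      calc (∑ i ∈ Finset.range (n * p^m), (i:K)) * 2
          = ((((∑ i ∈ Finset.range (n * p^m), i) * 2 : ℕ)) : K) := by
            rw [← hcast]; push_cast; ring
        _ = (((n * p^m) * (n * p^m - 1) : ℕ) : K) := by rw [h]
        _ = ((n * p^m : ℕ):K) * (((n * p^m : ℕ):K) - 1) := by
            rw [Nat.cast_mul, Nat.cast_sub hN1]
            push_cast
            ring
    have hσ : (∑ i ∈ Finset.range (n * p^m), (i:K))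
        = ((n * p^m : ℕ):K) * (((n * p^m : ℕ):K) - 1) / 2 := by
      rw [eq_div_iff h2K, hgauss]
    rw [hstep1, hsumx, hσ, hNK]
    simp only [hBdef]
    set Sf : K := ∑ i ∈ Finset.range (n * p^m), f (x + (i:K)) with hSfdef
    set ln : K := logp (n:K) with hlndef
    set pm : K := (p:K)^m with hpmdef
    have hpm0' : pm ≠ 0 := hpm0 m
    rw [mul_inv]
    field_simp
    ring
  -- limits
  have hA1 : Tendsto (fun m : ℕ => ∑ k ∈ Finset.range n,
        ((p:K)^m)⁻¹ * ∑ j ∈ Finset.range (p^m), f ((x + (k:K)) / (n:K) + (j:K)))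
      atTop (nhds (∑ k ∈ Finset.range n, G ((x + (k:K)) / (n:K)))) := by
    apply tendsto_finset_sum
    intro k _
    exact hG' _ (hWmem k)
  have hz2 : Tendsto (fun m : ℕ => logp (n:K) * ((n:K) * (p:K)^m) / 2) atTop (nhds 0) := by
    have h0 : Tendsto (fun m : ℕ => (p:K)^m) atTop (nhds 0) := by
      apply tendsto_pow_atTop_nhds_zero_of_norm_lt_one
      rw [hpK]; exact hpinv_lt
    have h1 := (h0.const_mul (logp (n:K) * (n:K) / 2))
    rw [mul_zero] at h1
    apply h1.congr
    intro m
    ring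
  have hA2 : Tendsto (fun m : ℕ => ∑ k ∈ Finset.range n,
        ((p:K)^m)⁻¹ * ∑ j ∈ Finset.range (p^m), f ((x + (k:K)) / (n:K) + (j:K)))
      atTop (nhds (G x - logp (n:K) * (x - 1/2))) := by
    have h1 := (hB.sub (tendsto_const_nhds (x := logp (n:K) * (x - 1/2)))).sub hz2
    rw [sub_zero] at h1
    apply h1.congr
    intro m
    rw [hAid m]
  have hfin := tendsto_nhds_unique hA1 hA2
  rw [hfin]
  ring
end
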